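/- arXiv:2012.15356 — 6 statements merged into one kernel-verified Lean document; each statement's English description precedes it below -/
import Mathlib

section
/- If F is a family of subsets of [n], i < j, and Δ_{i,j}(F) ≠ F, then the total weight sum ∑_{G ∈ Δ_{i,j}(F)} ∑_{b ∈ G} b is strictly smaller than ∑_{F' ∈ F} ∑_{a ∈ F'} a. -/
open Finset

def delta (i j : ℕ) (A : Finset ℕ) : Finset ℕ :=
  if j ∈ A ∧ i ∉ A then insert i (A.erase j) else A

def Delta (i j : ℕ) (F : Finset (Finset ℕ)) : Finset (Finset ℕ) :=
  F.image (delta i j) ∪ F.filter (fun A => delta i j A ∈ F)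

lemma delta_idem (i j : ℕ) (hij : i < j) (A : Finset ℕ) :
    delta i j (delta i j A) = delta i j A := by
  unfold delta
  by_cases h : j ∈ A ∧ i ∉ A
  · rw [if_pos h, if_neg]
    rintro ⟨hj', hi'⟩
    exact hi' (Finset.mem_insert_self i _)
  · rw [if_neg h, if_neg h]

lemma delta_inj (i j : ℕ) (hij : i < j) {A B : Finset ℕ}
    (hA : j ∈ A ∧ i ∉ A) (hB : j ∈ B ∧ i ∉ B)
    (h : delta i j A = delta i j B) : A = B := by
  have hA' : i ∉ A.erase j := fun hm => hA.2 (Finset.mem_of_mem_erase hm)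
  have hB' : i ∉ B.erase j := fun hm => hB.2 (Finset.mem_of_mem_erase hm)
  simp only [delta, if_pos hA, if_pos hB] at h
  have h2 : A.erase j = B.erase j := by
    ext x
    by_cases hx : x = i
    · simp [hx, hA', hB']
    · constructor
      · intro hm
        have : x ∈ insert i (B.erase j) := h ▸ Finset.mem_insert_of_mem hm
        exact (Finset.mem_insert.mp this).resolve_left hx
      · intro hm
        have : x ∈ insert i (A.erase j) := h ▸ Finset.mem_insert_of_mem hm
        exact (Finset.mem_insert.mp this).resolve_left hx
  calc A = insert j (A.erase j) := (Finset.insert_erase hA.1).symm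
    _ = insert j (B.erase j) := by rw [h2]
    _ = B := Finset.insert_erase hB.1

lemma delta_weight_lt (i j : ℕ) (hij : i < j) {A : Finset ℕ}
    (h : j ∈ A ∧ i ∉ A) : ∑ b ∈ delta i j A, b < ∑ a ∈ A, a := by
  have hi' : i ∉ A.erase j := fun hm => h.2 (mem_of_mem_erase hm)
  have h1 : ∑ b ∈ delta i j A, b = i + ∑ b ∈ A.erase j, b := by
    simp [delta, h, Finset.sum_insert hi']
  have h2 : ∑ a ∈ A, a = j + ∑ b ∈ A.erase j, b := (Finset.add_sum_erase A id h.1).symm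
  omega

lemma delta_weight_le (i j : ℕ) (hij : i < j) (A : Finset ℕ) :
    ∑ b ∈ delta i j A, b ≤ ∑ a ∈ A, a := by
  by_cases h : j ∈ A ∧ i ∉ A
  · exact (delta_weight_lt i j hij h).le
  · simp [delta, h]

theorem compression_weight_decreases (n : ℕ) (F : Finset (Finset ℕ))
    (hF : F ⊆ (Finset.Icc 1 n).powerset)
    (i j : ℕ) (hi : i ∈ Finset.Icc 1 n) (hj : j ∈ Finset.Icc 1 n)
    (hij : i < j) (hne : Delta i j F ≠ F) :
    ∑ G ∈ Delta i j F, ∑ b ∈ G, b < ∑ A ∈ F, ∑ a ∈ A, a := by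
  set f : Finset ℕ → Finset ℕ :=
    fun A => if delta i j A ∈ F then A else delta i j A with hf
  have himg : Delta i j F = F.image f := by
    ext B
    simp only [Delta, mem_union, mem_image, mem_filter, hf]
    constructor
    · rintro (⟨A, hA, rfl⟩ | ⟨hB, hdB⟩)
      · by_cases hd : delta i j A ∈ F
        · exact ⟨delta i j A, hd, by simp [delta_idem i j hij A, hd]⟩
        · exact ⟨A, hA, by simp [hd]⟩
      · exact ⟨B, hB, by simp [hdB]⟩
    · rintro ⟨A, hA, rfl⟩
      by_cases hd : delta i j A ∈ F
      · exact Or.inr (by simp [hd, hA])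
      · exact Or.inl ⟨A, hA, by simp [hd]⟩
  have hinj : ∀ A ∈ F, ∀ B ∈ F, f A = f B → A = B := by
    intro A hA B hB h
    simp only [hf] at h
    split_ifs at h with h1 h2 h2
    · exact h
    · -- A = delta B, delta B ∉ F, contradiction since A ∈ F
      exact absurd (h ▸ hA) h2
    · exact absurd (h ▸ hB) h1
    · -- both moved: conditions must hold, else delta A = A ∈ F
      by_cases hcA : j ∈ A ∧ i ∉ A
      · by_cases hcB : j ∈ B ∧ i ∉ B
        · exact delta_inj i j hij hcA hcB h
        · exact absurd (by simpa [delta, hcB] using hB) h2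
      · exact absurd (by simpa [delta, hcA] using hA) h1
  rw [himg, Finset.sum_image hinj]
  have hle : ∀ A ∈ F, ∑ b ∈ f A, b ≤ ∑ a ∈ A, a := by
    intro A _
    simp only [hf]
    split_ifs with h
    · exact le_refl _
    · exact delta_weight_le i j hij A
  -- find a strict element
  have hex : ∃ A ∈ F, f A ≠ A := by
    by_contra hc
    push_neg at hc
    apply hne
    rw [himg]
    apply Finset.image_congr (g := id) (fun A hA => hc A hA) |>.trans
    exact Finset.image_id
  obtain ⟨A, hA, hfA⟩ := hex
  refine Finset.sum_lt_sum hle ⟨A, hA, ?_⟩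
  have hd : delta i j A ∉ F := by
    intro h; exact hfA (by simp [hf, h])
  have hc : j ∈ A ∧ i ∉ A := by
    by_contra hcc
    have he : delta i j A = A := by simp [delta, hcc]
    exact hd (by rw [he]; exact hA)
  simp only [hf, if_neg hd]
  exact delta_weight_lt i j hij hc
end

section
/- Let 1 ≤ r ≤ s, n ≥ 1. If A is a non-empty family of subsets of [n] each of size at most r, B is a non-empty family of subsets of [n] each of size at most s, and A and B are cross-intersecting, then |A| + |B| ≤ 1 + ∑_{i=1}^{s} ( C(n,i) − C(n−r,i) ). -/
open Finset

namespace BF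


def Cross (A B : Finset (Finset ℕ)) : Prop := ∀ a ∈ A, ∀ b ∈ B, (a ∩ b).Nonempty

def bnd (n r s : ℕ) : ℕ := 1 + ∑ i ∈ Finset.Icc 1 s, (n.choose i - (n - r).choose i)

/-- sum of tsub distributes given termwise domination -/
lemma sum_tsub' (T : Finset ℕ) (f g : ℕ → ℕ) (h : ∀ i ∈ T, g i ≤ f i) :
    ∑ i ∈ T, (f i - g i) = (∑ i ∈ T, f i) - ∑ i ∈ T, g i := by
  induction T using Finset.induction_on with
  | empty => simp
  | insert a T₀ hx ih =>
    have h1 : g a ≤ f a := h a (mem_insert_self a T₀)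
    have h2 : ∑ i ∈ T₀, g i ≤ ∑ i ∈ T₀, f i :=
      sum_le_sum (fun i hi => h i (mem_insert_of_mem hi))
    rw [sum_insert hx, sum_insert hx, sum_insert hx, ih (fun i hi => h i (mem_insert_of_mem hi))]
    omega

lemma Icc_one_sum (f : ℕ → ℕ) (s : ℕ) : ∑ i ∈ Icc 1 s, f i = ∑ k ∈ range s, f (k + 1) := by
  rw [← Finset.Ico_add_one_right_eq_Icc, sum_Ico_eq_sum_range]
  simp [Nat.add_comm]

/-- counting: a family of nonempty subsets of `Icc 1 N` with card ≤ t all meeting K -/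
lemma card_le_sum_count {N t : ℕ} (K : Finset ℕ) (hK : K ⊆ Icc 1 N)
    (F : Finset (Finset ℕ))
    (hF : ∀ S ∈ F, S ⊆ Icc 1 N ∧ S.Nonempty ∧ S.card ≤ t ∧ (S ∩ K).Nonempty) :
    F.card ≤ ∑ i ∈ Icc 1 t, (N.choose i - (N - K.card).choose i) := by
  have hfib : ∀ S ∈ F, S.card ∈ Icc 1 t := by
    intro S hS
    obtain ⟨-, h1, h2, -⟩ := hF S hS
    rw [mem_Icc]
    exact ⟨card_pos.2 h1, h2⟩
  rw [card_eq_sum_card_fiberwise hfib]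
  refine sum_le_sum (fun i hi => ?_)
  have hsub : F.filter (fun S => S.card = i) ⊆
      (Icc 1 N).powersetCard i \ ((Icc 1 N \ K).powersetCard i) := by
    intro S hS
    rw [mem_filter] at hS
    obtain ⟨hS, hcard⟩ := hS
    obtain ⟨hsub, -, -, hmeet⟩ := hF S hS
    rw [mem_sdiff, mem_powersetCard, mem_powersetCard]
    refine ⟨⟨hsub, hcard⟩, ?_⟩
    rintro ⟨hsub2, -⟩
    obtain ⟨x, hx⟩ := hmeet
    rw [mem_inter] at hx
    have := hsub2 hx.1
    rw [mem_sdiff] at this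
    exact this.2 hx.2
  calc (F.filter (fun S => S.card = i)).card
      ≤ ((Icc 1 N).powersetCard i \ ((Icc 1 N \ K).powersetCard i)).card := card_le_card hsub
    _ ≤ N.choose i - (N - K.card).choose i := by
        rw [card_sdiff_of_subset (powersetCard_mono sdiff_subset)]
        rw [card_powersetCard, card_powersetCard, card_sdiff_of_subset hK, Nat.card_Icc]
        simp

/-- counting without the K-condition -/
lemma card_le_sum_count' {N t : ℕ} (F : Finset (Finset ℕ))
    (hF : ∀ S ∈ F, S ⊆ Icc 1 N ∧ S.Nonempty ∧ S.card ≤ t) :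
    F.card ≤ ∑ i ∈ Icc 1 t, N.choose i := by
  have hfib : ∀ S ∈ F, S.card ∈ Icc 1 t := by
    intro S hS
    obtain ⟨-, h1, h2⟩ := hF S hS
    rw [mem_Icc]
    exact ⟨card_pos.2 h1, h2⟩
  rw [card_eq_sum_card_fiberwise hfib]
  refine sum_le_sum (fun i _ => ?_)
  calc (F.filter (fun S => S.card = i)).card
      ≤ ((Icc 1 N).powersetCard i).card := by
        refine card_le_card (fun S hS => ?_)
        rw [mem_filter] at hS
        rw [mem_powersetCard]
        exact ⟨(hF S hS.1).1, hS.2⟩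
    _ = N.choose i := by rw [card_powersetCard, Nat.card_Icc]; simp

/-- `∑_{i≤r} C(m,i) ≤ C(m+r, r)` -/
lemma sum_range_choose_le (m : ℕ) : ∀ r : ℕ, ∑ i ∈ range (r + 1), m.choose i ≤ (m + r).choose r := by
  intro r
  induction r with
  | zero => simp
  | succ r ih =>
    rw [sum_range_succ]
    have h1 : m.choose (r + 1) ≤ (m + r).choose (r + 1) := Nat.choose_le_choose _ (by omega)
    have h2 : (m + (r+1)).choose (r+1) = (m + r).choose r + (m + r).choose (r + 1) := by
      have : m + (r + 1) = (m + r) + 1 := by omega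
      rw [this, Nat.choose_succ_succ]
    omega

/-- termwise monotone bound -/
lemma sum_count_mono {N a r t t' : ℕ} (har : a ≤ r) (htt : t ≤ t') :
    ∑ i ∈ Icc 1 t, (N.choose i - (N - a).choose i) ≤
    ∑ i ∈ Icc 1 t', (N.choose i - (N - r).choose i) := by
  calc ∑ i ∈ Icc 1 t, (N.choose i - (N - a).choose i)
      ≤ ∑ i ∈ Icc 1 t, (N.choose i - (N - r).choose i) := by
        refine sum_le_sum (fun i _ => ?_)
        have : (N - r).choose i ≤ (N - a).choose i := Nat.choose_le_choose _ (by omega)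
        omega
    _ ≤ ∑ i ∈ Icc 1 t', (N.choose i - (N - r).choose i) := by
        refine sum_le_sum_of_subset (fun x hx => ?_)
        rw [mem_Icc] at *
        omega

/-- Pascal recursion for the bound -/
lemma pascal_bnd (m r s : ℕ) (hr : 1 ≤ r) (hrs : r ≤ s) (hsm : s ≤ m) :
    bnd (m + 1) r s = bnd m r s + ∑ i ∈ Icc 1 (s - 1), (m.choose i - (m - r).choose i) := by
  unfold bnd
  have key : ∑ i ∈ Icc 1 s, ((m+1).choose i - (m + 1 - r).choose i) =
      ∑ i ∈ Icc 1 s, (m.choose i - (m - r).choose i) +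
      ∑ i ∈ Icc 1 (s-1), (m.choose i - (m - r).choose i) := by
    rw [Icc_one_sum, Icc_one_sum, Icc_one_sum]
    have hm1r : m + 1 - r = (m - r) + 1 := by omega
    have expand : ∀ k, (m+1).choose (k+1) - (m + 1 - r).choose (k+1)
        = (m.choose k - (m-r).choose k) + (m.choose (k+1) - (m-r).choose (k+1)) := by
      intro k
      rw [hm1r, Nat.choose_succ_succ, Nat.choose_succ_succ]
      simp only [Nat.succ_eq_add_one]
      have h1 : (m-r).choose k ≤ m.choose k := Nat.choose_le_choose _ (by omega)
      have h2 : (m-r).choose (k+1) ≤ m.choose (k+1) := Nat.choose_le_choose _ (by omega)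
      omega
    rw [sum_congr rfl (fun k _ => expand k), sum_add_distrib]
    obtain ⟨s', rfl⟩ : ∃ s', s = s' + 1 := ⟨s - 1, by omega⟩
    rw [Finset.sum_range_succ' (fun k => m.choose k - (m - r).choose k) s']
    simp only [Nat.choose_zero_right, Nat.add_sub_cancel, Nat.sub_self, add_zero,
      Nat.add_one_sub_one]
    omega
  omega

/-- bnd m (r-1) (s-1) + something: `1 + ∑ (C(m,i)-C(m-(r-1),i)) ≤ ∑ (C(m,i)-C(m-r),i))` -/
lemma bnd_step_le (m r s : ℕ) (h2r : 2 ≤ r) (hrs : r ≤ s) (hsm : s ≤ m) :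
    1 + ∑ i ∈ Icc 1 (s-1), (m.choose i - (m - (r-1)).choose i) ≤
    ∑ i ∈ Icc 1 (s-1), (m.choose i - (m - r).choose i) := by
  have h1s : 1 ∈ Icc 1 (s-1) := by rw [mem_Icc]; omega
  rw [← Finset.add_sum_erase _ _ h1s, ← Finset.add_sum_erase _ _ h1s]
  have hterm : 1 + (m.choose 1 - (m - (r-1)).choose 1) ≤ m.choose 1 - (m - r).choose 1 := by
    rw [Nat.choose_one_right, Nat.choose_one_right, Nat.choose_one_right]
    omega
  have hrest : ∑ i ∈ (Icc 1 (s-1)).erase 1, (m.choose i - (m - (r-1)).choose i) ≤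
      ∑ i ∈ (Icc 1 (s-1)).erase 1, (m.choose i - (m - r).choose i) := by
    refine sum_le_sum (fun i _ => ?_)
    have : (m - r).choose i ≤ (m - (r-1)).choose i := Nat.choose_le_choose _ (by omega)
    omega
  omega

/-- TEST-J': `∑_{i=1}^{r-1} C(m,i) ≤ ∑_{i=1}^{s-1} (C(m,i) - C(m-r,i))` for r < s ≤ m -/
lemma testJ (m r s : ℕ) (hr : 1 ≤ r) (hrs : r < s) (hsm : s ≤ m) :
    ∑ i ∈ Icc 1 (r-1), m.choose i ≤ ∑ i ∈ Icc 1 (s-1), (m.choose i - (m - r).choose i) := by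
  have hIcc : ∀ t : ℕ, 1 ≤ t → Icc 1 (t-1) = Ico 1 t := by
    intro t ht; rw [← Finset.Ico_add_one_right_eq_Icc]; congr 1; omega
  rw [hIcc r hr, hIcc s (by omega)]
  have hsplit : ∑ i ∈ Ico 1 s, (m.choose i - (m-r).choose i) =
      (∑ i ∈ Ico 1 s, m.choose i) - ∑ i ∈ Ico 1 s, (m-r).choose i := by
    induction (Ico 1 s) using Finset.induction_on with
    | empty => simp
    | insert a T₀ hx ih =>
      have h1 : (m-r).choose a ≤ m.choose a := Nat.choose_le_choose _ (by omega)
      have h2 : ∑ i ∈ T₀, (m-r).choose i ≤ ∑ i ∈ T₀, m.choose i :=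
        sum_le_sum (fun i _ => Nat.choose_le_choose _ (by omega))
      rw [sum_insert hx, sum_insert hx, sum_insert hx, ih]
      omega
  rw [hsplit]
  have e1 : ∑ i ∈ Ico 1 r, m.choose i + ∑ i ∈ Ico r s, m.choose i = ∑ i ∈ Ico 1 s, m.choose i :=
    sum_Ico_consecutive _ (by omega) (by omega)
  have e2 : ∑ i ∈ Ico 1 (r+1), (m-r).choose i + ∑ i ∈ Ico (r+1) s, (m-r).choose i
      = ∑ i ∈ Ico 1 s, (m-r).choose i :=
    sum_Ico_consecutive _ (by omega) (by omega)
  have e3 : ∑ i ∈ Ico r (r+1), m.choose i + ∑ i ∈ Ico (r+1) s, m.choose i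
      = ∑ i ∈ Ico r s, m.choose i :=
    sum_Ico_consecutive _ (by omega) (by omega)
  have e4 : ∑ i ∈ Ico r (r+1), m.choose i = m.choose r := by
    rw [Nat.Ico_succ_singleton, sum_singleton]
  have term2 : ∑ i ∈ Ico (r+1) s, (m-r).choose i ≤ ∑ i ∈ Ico (r+1) s, m.choose i :=
    sum_le_sum (fun i _ => Nat.choose_le_choose _ (by omega))
  -- ∑_{Ico 1 (r+1)} C(m-r,i) + 1 ≤ C(m,r)
  have term1 : ∑ i ∈ Ico 1 (r+1), (m-r).choose i + 1 ≤ m.choose r := by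
    have h5 : ∑ i ∈ range (r+1), (m-r).choose i ≤ ((m-r) + r).choose r := sum_range_choose_le _ r
    have h6 : (m - r) + r = m := by omega
    rw [h6] at h5
    have h7 : ∑ i ∈ range (r+1), (m-r).choose i
        = ∑ i ∈ range r, (m-r).choose (i+1) + (m-r).choose 0 := Finset.sum_range_succ' _ r
    have h8 : ∑ i ∈ Ico 1 (r+1), (m-r).choose i = ∑ i ∈ range r, (m-r).choose (i+1) := by
      rw [← Icc_one_sum]
      rw [Finset.Ico_add_one_right_eq_Icc]
    rw [h8]
    simp only [Nat.choose_zero_right] at h7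
    omega
  omega



def wt (F : Finset (Finset ℕ)) : ℕ := ∑ S ∈ F, ∑ x ∈ S, x

lemma compress_eval {i j : ℕ} {S : Finset ℕ} (hij : i ≠ j) (hjS : j ∈ S) (hiS : i ∉ S) :
    UV.compress {i} {j} S = insert i (S.erase j) := by
  rw [UV.compress, if_pos ⟨disjoint_singleton_left.2 hiS, singleton_subset_iff.2 hjS⟩]
  rw [sup_eq_union, sdiff_singleton_eq_erase, union_comm, ← insert_eq,
    erase_insert_of_ne hij]

lemma compress_eval_id {i j : ℕ} {S : Finset ℕ} (h : j ∉ S ∨ i ∈ S) :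
    UV.compress {i} {j} S = S := by
  rw [UV.compress, if_neg]
  rintro ⟨h1, h2⟩
  rw [disjoint_singleton_left] at h1
  have h2' : ({j} : Finset ℕ) ⊆ S := h2
  rw [singleton_subset_iff] at h2'
  tauto

/-- structure of members of a compression -/
lemma mem_compression_struct {i j : ℕ} {F : Finset (Finset ℕ)} {X : Finset ℕ}
    (hX : X ∈ UV.compression {i} {j} F) :
    ∃ S ∈ F, X.card = S.card ∧ X ⊆ insert i S := by
  rw [UV.mem_compression] at hX
  rcases hX with ⟨hXF, -⟩ | ⟨-, S, hS, rfl⟩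
  · exact ⟨X, hXF, rfl, subset_insert _ _⟩
  · refine ⟨S, hS, UV.card_compress (by simp) S, ?_⟩
    rw [UV.compress]
    split
    · refine sdiff_subset.trans ?_
      rw [sup_eq_union, union_comm, ← insert_eq]
    · exact subset_insert _ _

/-- weight decomposition of compression -/
lemma wt_compression_le {i j : ℕ} (hij : i < j) (F : Finset (Finset ℕ)) :
    wt (UV.compression {i} {j} F) ≤ wt F ∧
      (UV.compression {i} {j} F ≠ F → wt (UV.compression {i} {j} F) < wt F) := by
  classical
  set c : Finset ℕ → Finset ℕ := UV.compress ({i} : Finset ℕ) ({j} : Finset ℕ) with hc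
  have hdecomp : UV.compression {i} {j} F =
      (F.filter fun a => c a ∈ F) ∪ (F.filter fun a => c a ∉ F).image c := by
    rw [UV.compression, filter_image]
  have hdisj : Disjoint (F.filter fun a => c a ∈ F) ((F.filter fun a => c a ∉ F).image c) := by
    have := UV.compress_disjoint (s := F) (u := ({i} : Finset ℕ)) (v := ({j} : Finset ℕ))
    rwa [filter_image] at this
  have hinj : ∀ x ∈ F.filter fun a => c a ∉ F, ∀ y ∈ F.filter fun a => c a ∉ F,
      c x = c y → x = y := by
    intro x hx y hy hxy
    exact UV.compress_injOn (by simpa using hx) (by simpa using hy) hxy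
  have hwlt : ∀ S ∈ F.filter (fun a => c a ∉ F), (∑ x ∈ c S, x) < ∑ x ∈ S, x := by
    intro S hS
    have hne : c S ≠ S := by
      intro hSS
      rw [mem_filter] at hS
      exact hS.2 (by rw [hSS]; exact hS.1)
    by_cases hcond : j ∈ S ∧ i ∉ S
    · rw [hc, compress_eval (by omega) hcond.1 hcond.2]
      have hjsum : j ≤ ∑ x ∈ S, x :=
        single_le_sum (f := fun x => x) (fun _ _ => Nat.zero_le _) hcond.1
      rw [sum_insert (fun hmem => hcond.2 (mem_of_mem_erase hmem))]
      have he : (∑ x ∈ S.erase j, x) + j = ∑ x ∈ S, x := Finset.sum_erase_add S _ hcond.1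
      omega
    · exact absurd (compress_eval_id (by tauto)) hne
  have hweq : wt (UV.compression {i} {j} F) =
      (∑ S ∈ F.filter (fun a => c a ∈ F), ∑ x ∈ S, x) +
      ∑ S ∈ F.filter (fun a => c a ∉ F), ∑ x ∈ c S, x := by
    rw [wt, hdecomp, sum_union hdisj, sum_image hinj]
  have hFeq : wt F = (∑ S ∈ F.filter (fun a => c a ∈ F), ∑ x ∈ S, x) +
      ∑ S ∈ F.filter (fun a => c a ∉ F), ∑ x ∈ S, x := by
    rw [wt, ← sum_filter_add_sum_filter_not F (fun a => c a ∈ F)]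
  constructor
  · rw [hweq, hFeq]
    exact Nat.add_le_add_left (sum_le_sum (fun S hS => le_of_lt (hwlt S hS))) _
  · intro hne
    have hne2 : (F.filter fun a => c a ∉ F).Nonempty := by
      rw [nonempty_iff_ne_empty]
      intro hemp
      apply hne
      have h1 : ∀ a ∈ F, c a ∈ F := by
        intro a ha
        by_contra hc2
        have : a ∈ F.filter fun a => c a ∉ F := mem_filter.2 ⟨ha, hc2⟩
        rw [hemp] at this
        exact notMem_empty _ this
      rw [hdecomp, hemp, image_empty, union_empty, filter_true_of_mem h1]
    rw [hweq, hFeq]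
    exact Nat.add_lt_add_left (sum_lt_sum_of_nonempty hne2 hwlt) _

/-- cross-intersecting is preserved by simultaneous compression -/
lemma cross_compression {i j : ℕ} (hij : i ≠ j) {A B : Finset (Finset ℕ)} (h : Cross A B) :
    Cross (UV.compression {i} {j} A) (UV.compression {i} {j} B) := by
  classical
  have mixed : ∀ (𝒳 𝒴 : Finset (Finset ℕ)), Cross 𝒳 𝒴 →
      ∀ X, X ∈ 𝒳 → UV.compress {i} {j} X ∈ 𝒳 →
      ∀ T, T ∈ 𝒴 → UV.compress {i} {j} T ∉ 𝒴 → (X ∩ UV.compress {i} {j} T).Nonempty := by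
    intro 𝒳 𝒴 hXY X hX hcX T hT hcT
    have hmoveT : j ∈ T ∧ i ∉ T := by
      by_contra hcond
      exact hcT (by rw [compress_eval_id (by tauto)]; exact hT)
    rw [compress_eval hij hmoveT.1 hmoveT.2]
    by_contra hne
    rw [not_nonempty_iff_eq_empty] at hne
    have hempty : ∀ z, z ∈ X → z ∈ insert i (T.erase j) → False := by
      intro z h1 h2
      have : z ∈ X ∩ insert i (T.erase j) := mem_inter.2 ⟨h1, h2⟩
      rw [hne] at this
      exact notMem_empty _ this
    obtain ⟨x, hx⟩ := hXY X hX T hT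
    rw [mem_inter] at hx
    have hxj : x = j := by
      by_contra hxj
      exact hempty x hx.1 (mem_insert_of_mem (mem_erase.2 ⟨hxj, hx.2⟩))
    have hjX : j ∈ X := hxj ▸ hx.1
    have hiX : i ∉ X := fun hiX => hempty i hiX (mem_insert_self _ _)
    rw [compress_eval hij hjX hiX] at hcX
    obtain ⟨z, hz⟩ := hXY _ hcX T hT
    rw [mem_inter, mem_insert] at hz
    rcases hz.1 with rfl | hz1
    · exact hmoveT.2 hz.2
    · rw [mem_erase] at hz1
      exact hempty z hz1.2 (mem_insert_of_mem (mem_erase.2 ⟨hz1.1, hz.2⟩))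
  intro X hX Y hY
  rw [UV.mem_compression] at hX hY
  rcases hX with ⟨hXA, hcX⟩ | ⟨hXA, S, hS, rfl⟩ <;>
    rcases hY with ⟨hYB, hcY⟩ | ⟨hYB, T, hT, rfl⟩
  · exact h X hXA Y hYB
  · exact mixed A B h X hXA hcX T hT hYB
  · obtain ⟨z, hz⟩ := mixed B A (fun b hb a ha => by
      obtain ⟨x, hx⟩ := h a ha b hb
      rw [mem_inter] at hx
      exact ⟨x, mem_inter.2 ⟨hx.2, hx.1⟩⟩) Y hYB hcY S hS hXA
    rw [mem_inter] at hz
    exact ⟨z, mem_inter.2 ⟨hz.2, hz.1⟩⟩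
  · have hSm : j ∈ S ∧ i ∉ S := by
      by_contra hcond
      exact hXA (by rw [compress_eval_id (by tauto)]; exact hS)
    have hTm : j ∈ T ∧ i ∉ T := by
      by_contra hcond
      exact hYB (by rw [compress_eval_id (by tauto)]; exact hT)
    refine ⟨i, mem_inter.2 ⟨?_, ?_⟩⟩
    · rw [compress_eval hij hSm.1 hSm.2]; exact mem_insert_self _ _
    · rw [compress_eval hij hTm.1 hTm.2]; exact mem_insert_self _ _

/-- a compressed family contains the initial segment of each of its member's size -/
lemma Icc_mem_of_compressed {n : ℕ} {F : Finset (Finset ℕ)}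
    (hcl : ∀ i' j' : ℕ, 1 ≤ i' → i' < j' → j' ≤ n → ∀ S ∈ F, UV.compress {i'} {j'} S ∈ F) :
    ∀ S ∈ F, S ⊆ Icc 1 n → Icc 1 S.card ∈ F := by
  suffices haux : ∀ w S, (∑ x ∈ S, x) = w → S ∈ F → S ⊆ Icc 1 n → Icc 1 S.card ∈ F by
    intro S hS hsub
    exact haux _ S rfl hS hsub
  intro w
  induction w using Nat.strong_induction_on with
  | _ w ih =>
    intro S hwS hSF hsub
    by_cases hS : S = Icc 1 S.card
    · rw [← hS]; exact hSF
    · have hcard : (Icc 1 S.card).card = S.card := by rw [Nat.card_Icc]; omega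
      have h1 : ¬ S ⊆ Icc 1 S.card := by
        intro hsub'
        exact hS (eq_of_subset_of_card_le hsub' (by omega))
      obtain ⟨j, hjS, hjI⟩ := not_subset.1 h1
      have hj1 : 1 ≤ j ∧ j ≤ n := by
        have := hsub hjS; rw [mem_Icc] at this; exact this
      have hjbig : S.card < j := by
        rw [mem_Icc] at hjI; omega
      have h2 : ¬ Icc 1 S.card ⊆ S := by
        intro hIS
        have hsub2 : insert j (Icc 1 S.card) ⊆ S := insert_subset hjS hIS
        have := card_le_card hsub2
        rw [card_insert_of_notMem hjI, hcard] at this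
        omega
      obtain ⟨i, hiI, hiS⟩ := not_subset.1 h2
      have hi1 : 1 ≤ i ∧ i ≤ S.card := by rw [mem_Icc] at hiI; exact hiI
      have hij : i < j := by omega
      have hcomp := hcl i j hi1.1 hij hj1.2 S hSF
      rw [compress_eval (by omega) hjS hiS] at hcomp
      have hie : i ∉ S.erase j := fun hmem => hiS (mem_of_mem_erase hmem)
      have hcardeq : (insert i (S.erase j)).card = S.card := by
        rw [card_insert_of_notMem hie, card_erase_of_mem hjS]
        have : 1 ≤ S.card := card_pos.2 ⟨j, hjS⟩
        omega
      have hsubnew : insert i (S.erase j) ⊆ Icc 1 n := by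
        refine insert_subset (by rw [mem_Icc]; constructor <;> omega) ?_
        exact (erase_subset _ _).trans hsub
      have hwnew : (∑ x ∈ insert i (S.erase j), x) < w := by
        rw [sum_insert hie]
        have he : (∑ x ∈ S.erase j, x) + j = ∑ x ∈ S, x := Finset.sum_erase_add S _ hjS
        omega
      have := ih _ hwnew (insert i (S.erase j)) rfl hcomp hsubnew
      rwa [hcardeq] at this


lemma co_co {T U : Finset ℕ} (h : T ⊆ U) : U \ (U \ T) = T := by
  rw [sdiff_sdiff_right_self, inf_eq_inter]
  exact inter_eq_right.2 h

lemma sum_range_choose_pred (m : ℕ) : ∑ i ∈ range m, m.choose i = 2^m - 1 := by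
  have h1 := Nat.sum_range_choose m
  rw [sum_range_succ] at h1
  simp only [Nat.choose_self] at h1
  omega

lemma sum_Icc_choose_eq (n m : ℕ) (hmn : m ≤ n) :
    ∑ i ∈ Icc 1 n, m.choose i = 2^m - 1 := by
  rw [Icc_one_sum]
  have h1 : ∑ i ∈ range (n+1), m.choose i = ∑ i ∈ range (m+1), m.choose i := by
    symm
    refine Finset.sum_subset (by rw [range_subset_range]; omega) ?_
    intro x hx hnx
    rw [mem_range] at hx hnx
    exact Nat.choose_eq_zero_of_lt (by omega)
  rw [Nat.sum_range_choose] at h1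
  have h2 : ∑ i ∈ range (n+1), m.choose i = m.choose 0 + ∑ k ∈ range n, m.choose (k+1) := by
    rw [Finset.sum_range_succ']
    omega
  simp only [Nat.choose_zero_right] at h2
  omega

lemma bnd_top (n r : ℕ) (hr : 1 ≤ r) (hrn : r ≤ n) : bnd n r n + (2^(n-r) - 1) = 2^n := by
  unfold bnd
  rw [sum_tsub' _ _ _ (fun i _ => Nat.choose_le_choose _ (by omega))]
  rw [sum_Icc_choose_eq n n le_rfl, sum_Icc_choose_eq n (n-r) (by omega)]
  have h1 : (1:ℕ) ≤ 2^(n-r) := Nat.one_le_two_pow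
  have h2 : (2:ℕ)^(n-r) ≤ 2^n := Nat.pow_le_pow_right (by norm_num) (by omega)
  have h3 : (1:ℕ) ≤ 2^n := Nat.one_le_two_pow
  omega

lemma powerset_filter_card_le (X : Finset ℕ) (c : ℕ) :
    (X.powerset.filter (fun T => T.card ≤ c)).card = ∑ i ∈ range (c+1), X.card.choose i := by
  have hfib : ∀ T ∈ X.powerset.filter (fun T => T.card ≤ c), T.card ∈ range (c+1) := by
    intro T hT
    rw [mem_filter] at hT
    rw [mem_range]
    omega
  rw [card_eq_sum_card_fiberwise hfib]
  refine sum_congr rfl (fun i hi => ?_)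
  rw [mem_range] at hi
  have : (X.powerset.filter (fun T => T.card ≤ c)).filter (fun T => T.card = i)
      = X.powersetCard i := by
    ext T
    rw [mem_filter, mem_filter, mem_powerset, mem_powersetCard]
    constructor
    · rintro ⟨⟨h1, -⟩, h3⟩; exact ⟨h1, h3⟩
    · rintro ⟨h1, h2⟩; exact ⟨⟨h1, by omega⟩, h2⟩
  rw [this, card_powersetCard]

/-- the case s = n by complement pairing -/
lemma top_case (n r : ℕ) (hr : 1 ≤ r) (hrn : r ≤ n) (A B : Finset (Finset ℕ))
    (hA : ∀ S ∈ A, S ⊆ Icc 1 n ∧ S.card ≤ r) (hB : ∀ S ∈ B, S ⊆ Icc 1 n)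
    (hAne : A.Nonempty) (hcross : Cross A B) :
    A.card + B.card ≤ bnd n r n := by
  classical
  set co : Finset ℕ → Finset ℕ := fun T => Icc 1 n \ T with hco
  set coB : Finset (Finset ℕ) := B.image co with hcoB
  have hcoinj : ∀ T ∈ B, ∀ T' ∈ B, co T = co T' → T = T' := by
    intro T hT T' hT' h
    have := congrArg (fun Z => Icc 1 n \ Z) h
    simpa [hco, co_co (hB T hT), co_co (hB T' hT')] using this
  have hcardcoB : coB.card = B.card := card_image_of_injOn hcoinj
  have hdisjAcoB : Disjoint A coB := by
    rw [disjoint_right]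
    intro X hX hXA
    rw [hcoB, mem_image] at hX
    obtain ⟨T, hT, rfl⟩ := hX
    obtain ⟨x, hx⟩ := hcross _ hXA T hT
    rw [mem_inter, hco] at hx
    obtain ⟨hx1, hx2⟩ := hx
    rw [mem_sdiff] at hx1
    exact hx1.2 hx2
  obtain ⟨A₀, hA₀⟩ := hAne
  have hA₀icc := (hA A₀ hA₀).1
  have hA₀r := (hA A₀ hA₀).2
  set X : Finset ℕ := Icc 1 n \ A₀ with hX
  set Gpre : Finset (Finset ℕ) := X.powerset.filter (fun T => T.card + r + 1 ≤ n) with hGpre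
  set G : Finset (Finset ℕ) := Gpre.image co with hG
  have hGmem : ∀ Z ∈ G, ∃ T, T ⊆ X ∧ T.card + r + 1 ≤ n ∧ Z = co T := by
    intro Z hZ
    rw [hG, mem_image] at hZ
    obtain ⟨T, hT, rfl⟩ := hZ
    rw [hGpre, mem_filter, mem_powerset] at hT
    exact ⟨T, hT.1, hT.2, rfl⟩
  have hcardG : G.card = Gpre.card := by
    refine card_image_of_injOn (fun T hT T' hT' h => ?_)
    rw [hGpre, mem_coe, mem_filter, mem_powerset] at hT hT'
    have h1 : T ⊆ Icc 1 n := hT.1.trans sdiff_subset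
    have h2 : T' ⊆ Icc 1 n := hT'.1.trans sdiff_subset
    have := congrArg (fun Z => Icc 1 n \ Z) h
    simpa [hco, co_co h1, co_co h2] using this
  have hdisjGA : Disjoint G A := by
    rw [disjoint_left]
    intro Z hZ hZA
    obtain ⟨T, hTX, hTc, rfl⟩ := hGmem Z hZ
    have hTicc : T ⊆ Icc 1 n := hTX.trans sdiff_subset
    have hc : (co T).card = n - T.card := by
      rw [hco, card_sdiff_of_subset hTicc, Nat.card_Icc]
      omega
    have := (hA _ hZA).2
    rw [hc] at this
    omega
  have hdisjGcoB : Disjoint G coB := by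
    rw [disjoint_left]
    intro Z hZ hZB
    obtain ⟨T, hTX, hTc, rfl⟩ := hGmem Z hZ
    rw [hcoB, mem_image] at hZB
    obtain ⟨T', hT', hTT⟩ := hZB
    have hTicc : T ⊆ Icc 1 n := hTX.trans sdiff_subset
    have : T' = T := by
      have := congrArg (fun Z => Icc 1 n \ Z) hTT
      simpa [hco, co_co hTicc, co_co (hB T' hT')] using this
    subst this
    obtain ⟨x, hx⟩ := hcross A₀ hA₀ T' hT'
    rw [mem_inter] at hx
    have := hTX hx.2
    rw [hX, mem_sdiff] at this
    exact this.2 hx.1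
  -- total bound
  have hsub : A ∪ coB ∪ G ⊆ (Icc 1 n).powerset := by
    intro Z hZ
    rw [mem_union, mem_union] at hZ
    rw [mem_powerset]
    rcases hZ with (hZ | hZ) | hZ
    · exact (hA Z hZ).1
    · rw [hcoB, mem_image] at hZ
      obtain ⟨T, -, rfl⟩ := hZ
      exact sdiff_subset
    · obtain ⟨T, -, -, rfl⟩ := hGmem Z hZ
      exact sdiff_subset
  have hcardunion : (A ∪ coB ∪ G).card = A.card + B.card + G.card := by
    rw [card_union_of_disjoint, card_union_of_disjoint hdisjAcoB, hcardcoB]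
    rw [disjoint_union_left]
    exact ⟨hdisjGA.symm, hdisjGcoB.symm⟩
  have htotal : A.card + B.card + G.card ≤ 2^n := by
    rw [← hcardunion]
    calc (A ∪ coB ∪ G).card ≤ (Icc 1 n).powerset.card := card_le_card hsub
      _ = 2^n := by rw [card_powerset, Nat.card_Icc]; norm_num
  -- lower bound on G
  have hGbig : 2^(n-r) - 1 ≤ G.card := by
    rw [hcardG, hGpre]
    rcases Nat.lt_or_ge r n with hrn2 | hrn2
    · have : (X.powerset.filter (fun T => T.card + r + 1 ≤ n)) =
          (X.powerset.filter (fun T => T.card ≤ n - r - 1)) := by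
        refine filter_congr (fun T _ => ?_)
        constructor <;> intro h <;> omega
      rw [this, powerset_filter_card_le]
      have hXcard : X.card = n - A₀.card := by
        rw [hX, card_sdiff_of_subset hA₀icc, Nat.card_Icc]
        omega
      have h2 : n - r - 1 + 1 = n - r := by omega
      rw [h2, hXcard]
      calc 2^(n-r) - 1 = ∑ i ∈ range (n-r), (n-r).choose i := (sum_range_choose_pred _).symm
        _ ≤ ∑ i ∈ range (n-r), (n - A₀.card).choose i :=
            sum_le_sum (fun i _ => Nat.choose_le_choose _ (by omega))
    · have : n - r = 0 := by omega
      rw [this]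
      simp
  have hbnd := bnd_top n r hr hrn
  omega

/-- The main workhorse: Borg–Feghali for `s ≤ n`. -/
theorem main (n : ℕ) : ∀ r s (A B : Finset (Finset ℕ)), 1 ≤ r → r ≤ s → s ≤ n →
    (∀ S ∈ A, S ⊆ Icc 1 n ∧ S.card ≤ r) → (∀ S ∈ B, S ⊆ Icc 1 n ∧ S.card ≤ s) →
    A.Nonempty → B.Nonempty → Cross A B → A.card + B.card ≤ bnd n r s := by
  induction n using Nat.strong_induction_on with
  | _ n ihn =>
  suffices H : ∀ fuel r s (A B : Finset (Finset ℕ)), wt A + wt B ≤ fuel →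
      1 ≤ r → r ≤ s → s ≤ n →
      (∀ S ∈ A, S ⊆ Icc 1 n ∧ S.card ≤ r) → (∀ S ∈ B, S ⊆ Icc 1 n ∧ S.card ≤ s) →
      A.Nonempty → B.Nonempty → Cross A B → A.card + B.card ≤ bnd n r s by
    intro r s A B hr hrs hsn hA hB hAne hBne hcross
    exact H (wt A + wt B) r s A B le_rfl hr hrs hsn hA hB hAne hBne hcross
  intro fuel
  induction fuel with
  | zero =>
    intro r s A B hw _ _ _ hA _ hAne hBne hcross
    exfalso
    obtain ⟨A₀, hA₀⟩ := hAne
    obtain ⟨B₀, hB₀⟩ := hBne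
    have h1 : wt A = 0 := by omega
    have h2 : (∑ x ∈ A₀, x) = 0 := by
      rw [wt] at h1
      exact (Finset.sum_eq_zero_iff.1 h1) A₀ hA₀
    have h3 : A₀ = ∅ := by
      rw [eq_empty_iff_forall_notMem]
      intro x hx
      have hx0 : x = 0 := by
        have := Finset.sum_eq_zero_iff.1 h2 x hx
        omega
      have := (hA A₀ hA₀).1 hx
      rw [mem_Icc] at this
      omega
    obtain ⟨z, hz⟩ := hcross A₀ hA₀ B₀ hB₀
    rw [h3] at hz
    simp at hz
  | succ fuel ihf =>
    intro r s A B hw hr hrs hsn hA hB hAne hBne hcross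
    rcases eq_or_lt_of_le hsn with rfl | hslt
    · -- s = n : complement pairing
      exact top_case s r hr hrs A B hA (fun S hS => (hB S hS).1) hAne hcross
    -- now s < n
    by_cases hcomp : ∀ i ∈ Icc 1 n, ∀ j ∈ Icc 1 n, i < j →
        UV.compression {i} {j} A = A ∧ UV.compression {i} {j} B = B
    swap
    · -- not compressed : compress and recurse on fuel
      push_neg at hcomp
      obtain ⟨i, hi, j, hj, hij, hne⟩ := hcomp
      rw [mem_Icc] at hi hj
      have hijne : i ≠ j := by omega
      have hwA := wt_compression_le hij A
      have hwB := wt_compression_le hij B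
      have hwlt : wt (UV.compression {i} {j} A) + wt (UV.compression {i} {j} B)
          < wt A + wt B := by
        by_cases hAeq : UV.compression {i} {j} A = A
        · have hBne2 : UV.compression {i} {j} B ≠ B := hne hAeq
          have := hwB.2 hBne2
          have := hwA.1
          omega
        · have := hwA.2 hAeq
          have := hwB.1
          omega
      have hbnd : ∀ (F : Finset (Finset ℕ)) (k : ℕ), (∀ S ∈ F, S ⊆ Icc 1 n ∧ S.card ≤ k) →
          ∀ S ∈ UV.compression {i} {j} F, S ⊆ Icc 1 n ∧ S.card ≤ k := by
        intro F k hF S hS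
        obtain ⟨S₀, hS₀, hcard, hsub⟩ := mem_compression_struct hS
        refine ⟨hsub.trans (insert_subset (by rw [mem_Icc]; omega) (hF S₀ hS₀).1), ?_⟩
        rw [hcard]; exact (hF S₀ hS₀).2
      have hne' : ∀ (F : Finset (Finset ℕ)), F.Nonempty → (UV.compression {i} {j} F).Nonempty := by
        intro F hF
        rw [← card_pos, UV.card_compression, card_pos]
        exact hF
      have hres := ihf r s (UV.compression {i} {j} A) (UV.compression {i} {j} B) (by omega)
        hr hrs hsn (hbnd A r hA) (hbnd B s hB)
        (hne' A hAne) (hne' B hBne) (cross_compression hijne hcross)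
      rwa [UV.card_compression, UV.card_compression] at hres
    · -- both families compressed : deletion at n
      classical
      set m := n - 1 with hm
      have hn1 : 1 ≤ n := by omega
      have hsm : s ≤ m := by omega
      have hclA : ∀ i j, 1 ≤ i → i < j → j ≤ n → ∀ S ∈ A, UV.compress {i} {j} S ∈ A := by
        intro i j h1 hij hjn S hS
        have hmem := UV.compress_mem_compression (u := ({i} : Finset ℕ)) (v := ({j} : Finset ℕ)) hS
        rwa [(hcomp i (mem_Icc.2 ⟨h1, by omega⟩) j (mem_Icc.2 ⟨by omega, hjn⟩) hij).1] at hmem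
      have hclB : ∀ i j, 1 ≤ i → i < j → j ≤ n → ∀ S ∈ B, UV.compress {i} {j} S ∈ B := by
        intro i j h1 hij hjn S hS
        have hmem := UV.compress_mem_compression (u := ({i} : Finset ℕ)) (v := ({j} : Finset ℕ)) hS
        rwa [(hcomp i (mem_Icc.2 ⟨h1, by omega⟩) j (mem_Icc.2 ⟨by omega, hjn⟩) hij).2] at hmem
      obtain ⟨B₀w, hB₀w⟩ := id hBne
      obtain ⟨A₀w, hA₀w⟩ := id hAne
      have hAnonempty : ∀ S ∈ A, S.Nonempty := by
        intro S hS
        obtain ⟨z, hz⟩ := hcross S hS B₀w hB₀w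
        exact ⟨z, (mem_inter.1 hz).1⟩
      have hBnonempty : ∀ S ∈ B, S.Nonempty := by
        intro S hS
        obtain ⟨z, hz⟩ := hcross A₀w hA₀w S hS
        exact ⟨z, (mem_inter.1 hz).2⟩
      obtain ⟨Amin, hAmin, hAminle⟩ := exists_min_image A card hAne
      obtain ⟨Bmin, hBmin, hBminle⟩ := exists_min_image B card hBne
      set a := Amin.card with ha
      set b := Bmin.card with hb
      have ha1 : 1 ≤ a := card_pos.2 (hAnonempty Amin hAmin)
      have har : a ≤ r := (hA Amin hAmin).2
      have hb1 : 1 ≤ b := card_pos.2 (hBnonempty Bmin hBmin)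
      have hbs : b ≤ s := (hB Bmin hBmin).2
      have hIccA : Icc 1 a ∈ A := Icc_mem_of_compressed hclA Amin hAmin (hA Amin hAmin).1
      have hIccB : Icc 1 b ∈ B := Icc_mem_of_compressed hclB Bmin hBmin (hB Bmin hBmin).1
      have hBmeet : ∀ T ∈ B, (T ∩ Icc 1 a).Nonempty := by
        intro T hT
        obtain ⟨z, hz⟩ := hcross _ hIccA T hT
        rw [mem_inter] at hz
        exact ⟨z, mem_inter.2 ⟨hz.2, hz.1⟩⟩
      have hAmeet : ∀ S ∈ A, (S ∩ Icc 1 b).Nonempty := fun S hS => hcross S hS _ hIccB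
      -- deletion families
      set A0 := A.filter (fun S => n ∉ S) with hA0
      set B0 := B.filter (fun S => n ∉ S) with hB0
      set A1 := (A.filter (fun S => n ∈ S)).image (fun S => S.erase n) with hA1
      set B1 := (B.filter (fun S => n ∈ S)).image (fun S => S.erase n) with hB1
      have herase_inj : ∀ (F : Finset (Finset ℕ)), ∀ x ∈ F.filter (fun S => n ∈ S),
          ∀ y ∈ F.filter (fun S => n ∈ S), x.erase n = y.erase n → x = y := by
        intro F x hx y hy hxy
        rw [mem_filter] at hx hy
        rw [← insert_erase hx.2, hxy, insert_erase hy.2]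
      have hcardA : A.card = A0.card + A1.card := by
        rw [hA1, card_image_of_injOn (herase_inj A), hA0]
        rw [← card_filter_add_card_filter_not (s := A) (p := fun S => n ∈ S)]
        omega
      have hcardB : B.card = B0.card + B1.card := by
        rw [hB1, card_image_of_injOn (herase_inj B), hB0]
        rw [← card_filter_add_card_filter_not (s := B) (p := fun S => n ∈ S)]
        omega
      -- membership facts
      have hA1mem : ∀ S' ∈ A1, insert n S' ∈ A ∧ n ∉ S' ∧ S' ⊆ Icc 1 m ∧ S'.card + 1 ≤ r
          ∧ S'.Nonempty := by
        intro S' hS'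
        rw [hA1, mem_image] at hS'
        obtain ⟨S, hS, rfl⟩ := hS'
        rw [mem_filter] at hS
        have h1 : insert n (S.erase n) = S := insert_erase hS.2
        have h2 : n ∉ S.erase n := notMem_erase _ _
        have h3 : S.erase n ⊆ Icc 1 m := by
          intro x hx
          rw [mem_erase] at hx
          have := (hA S hS.1).1 hx.2
          rw [mem_Icc] at *
          omega
        have h4 : (S.erase n).card + 1 ≤ r := by
          rw [card_erase_of_mem hS.2]
          have := (hA S hS.1).2
          have := card_pos.2 ⟨n, hS.2⟩
          omega
        refine ⟨by rw [h1]; exact hS.1, h2, h3, h4, ?_⟩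
        obtain ⟨z, hz⟩ := hAmeet S hS.1
        rw [mem_inter, mem_Icc] at hz
        refine ⟨z, mem_erase.2 ⟨by omega, hz.1⟩⟩
      have hB1mem : ∀ T' ∈ B1, insert n T' ∈ B ∧ n ∉ T' ∧ T' ⊆ Icc 1 m ∧ T'.card + 1 ≤ s
          ∧ T'.Nonempty ∧ (T' ∩ Icc 1 a).Nonempty := by
        intro T' hT'
        rw [hB1, mem_image] at hT'
        obtain ⟨T, hT, rfl⟩ := hT'
        rw [mem_filter] at hT
        have h1 : insert n (T.erase n) = T := insert_erase hT.2
        have h2 : n ∉ T.erase n := notMem_erase _ _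
        have h3 : T.erase n ⊆ Icc 1 m := by
          intro x hx
          rw [mem_erase] at hx
          have := (hB T hT.1).1 hx.2
          rw [mem_Icc] at *
          omega
        have h4 : (T.erase n).card + 1 ≤ s := by
          rw [card_erase_of_mem hT.2]
          have := (hB T hT.1).2
          have := card_pos.2 ⟨n, hT.2⟩
          omega
        have h5 : (T.erase n ∩ Icc 1 a).Nonempty := by
          obtain ⟨z, hz⟩ := hBmeet T hT.1
          rw [mem_inter, mem_Icc] at hz
          exact ⟨z, mem_inter.2 ⟨mem_erase.2 ⟨by omega, hz.1⟩, mem_Icc.2 ⟨hz.2.1, hz.2.2⟩⟩⟩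
        exact ⟨by rw [h1]; exact hT.1, h2, h3, h4, ⟨h5.choose, (mem_inter.1 h5.choose_spec).1⟩, h5⟩
      have hA0mem : ∀ S ∈ A0, S ∈ A ∧ n ∉ S ∧ S ⊆ Icc 1 m ∧ S.card ≤ r ∧ S.Nonempty := by
        intro S hS
        rw [hA0, mem_filter] at hS
        refine ⟨hS.1, hS.2, ?_, (hA S hS.1).2, hAnonempty S hS.1⟩
        intro x hx
        have := (hA S hS.1).1 hx
        rw [mem_Icc] at *
        have : x ≠ n := fun h => hS.2 (h ▸ hx)
        omega
      have hB0mem : ∀ T ∈ B0, T ∈ B ∧ n ∉ T ∧ T ⊆ Icc 1 m ∧ T.card ≤ s ∧ T.Nonempty := by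
        intro T hT
        rw [hB0, mem_filter] at hT
        refine ⟨hT.1, hT.2, ?_, (hB T hT.1).2, hBnonempty T hT.1⟩
        intro x hx
        have := (hB T hT.1).1 hx
        rw [mem_Icc] at *
        have : x ≠ n := fun h => hT.2 (h ▸ hx)
        omega
      have hA0ne : A0.Nonempty := by
        refine ⟨Icc 1 a, ?_⟩
        rw [hA0, mem_filter]
        exact ⟨hIccA, by rw [mem_Icc]; omega⟩
      have hB0ne : B0.Nonempty := by
        refine ⟨Icc 1 b, ?_⟩
        rw [hB0, mem_filter]
        exact ⟨hIccB, by rw [mem_Icc]; omega⟩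
      have hcrossA0B0 : Cross A0 B0 := fun x hx y hy =>
        hcross x (hA0mem x hx).1 y (hB0mem y hy).1
      -- Pascal
      have hpascal : bnd n r s = bnd m r s + ∑ i ∈ Icc 1 (s-1), (m.choose i - (m-r).choose i) := by
        have hn' : n = m + 1 := by omega
        rw [hn']
        exact pascal_bnd m r s hr hrs hsm
      set Δ := ∑ i ∈ Icc 1 (s-1), (m.choose i - (m-r).choose i) with hΔ
      have hmlt : m < n := by omega
      -- the (A0, B0) induction, used in several cases
      have hIH0 : A0.card + B0.card ≤ bnd m r s :=
        ihn m hmlt r s A0 B0 hr hrs hsm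
          (fun S hS => ⟨(hA0mem S hS).2.2.1, (hA0mem S hS).2.2.2.1⟩)
          (fun T hT => ⟨(hB0mem T hT).2.2.1, (hB0mem T hT).2.2.2.1⟩)
          hA0ne hB0ne hcrossA0B0
      -- counting bound for B1 (meets Icc 1 a)
      have hB1count : B1.card ≤ Δ := by
        have h1 : B1.card ≤ ∑ i ∈ Icc 1 (s-1), (m.choose i - (m - (Icc 1 a).card).choose i) := by
          refine card_le_sum_count (Icc 1 a) ?_ B1 ?_
          · intro x hx; rw [mem_Icc] at *; omega
          · intro T' hT'
            obtain ⟨-, -, h3, h4, h5, h6⟩ := hB1mem T' hT'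
            exact ⟨h3, h5, by omega, h6⟩
        have h2 : (Icc 1 a).card = a := by rw [Nat.card_Icc]; omega
        rw [h2] at h1
        exact h1.trans (sum_count_mono har le_rfl)
      rcases A1.eq_empty_or_nonempty with hA1e | hA1ne
      · rcases B1.eq_empty_or_nonempty with hB1e | hB1ne
        · -- case 1
          rw [hcardA, hcardB, hA1e, hB1e]
          simp only [card_empty, add_zero]
          omega
        · -- case 2 : A1 = ∅, B1 ≠ ∅
          rw [hcardA, hcardB, hA1e]
          simp only [card_empty, add_zero]
          omega
      · -- A1 ≠ ∅
        have hr2 : 2 ≤ r := by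
          obtain ⟨S', hS'⟩ := hA1ne
          obtain ⟨-, -, -, h4, h5⟩ := hA1mem S' hS'
          have := card_pos.2 h5
          omega
        rcases B1.eq_empty_or_nonempty with hB1e | hB1ne
        · -- case 3 : B1 = ∅, A1 ≠ ∅
          have hA1count : A1.card ≤ Δ := by
            rcases eq_or_lt_of_le hrs with rfl | hrlt
            · -- r = s : use meets Icc 1 b, b ≤ s = r
              have h1 : A1.card ≤ ∑ i ∈ Icc 1 (r-1), (m.choose i - (m - (Icc 1 b).card).choose i) := by
                refine card_le_sum_count (Icc 1 b) ?_ A1 ?_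
                · intro x hx; rw [mem_Icc] at *; omega
                · intro S' hS'
                  obtain ⟨hins, hn', h3, h4, h5⟩ := hA1mem S' hS'
                  refine ⟨h3, h5, by omega, ?_⟩
                  obtain ⟨z, hz⟩ := hAmeet _ hins
                  rw [mem_inter, mem_insert, mem_Icc] at hz
                  rcases hz.1 with rfl | hz1
                  · omega
                  · exact ⟨z, mem_inter.2 ⟨hz1, mem_Icc.2 hz.2⟩⟩
              have h2 : (Icc 1 b).card = b := by rw [Nat.card_Icc]; omega
              rw [h2] at h1
              exact h1.trans (sum_count_mono hbs (by omega))
            · -- r < s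
              have h1 : A1.card ≤ ∑ i ∈ Icc 1 (r-1), m.choose i := by
                refine card_le_sum_count' A1 ?_
                intro S' hS'
                obtain ⟨-, -, h3, h4, h5⟩ := hA1mem S' hS'
                exact ⟨h3, h5, by omega⟩
              exact h1.trans (testJ m r s hr hrlt hsm)
          rw [hcardA, hcardB, hB1e]
          simp only [card_empty, add_zero]
          omega
        · -- case 4 : both nonempty
          set P := A1.filter (fun S' => Icc 1 m \ S' ∈ B1) with hP
          set Pco := P.image (fun S' => Icc 1 m \ S') with hPco
          have hPsub : P ⊆ A1 := filter_subset _ _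
          have hPcosub : Pco ⊆ B1 := by
            intro T' hT'
            rw [hPco, mem_image] at hT'
            obtain ⟨S', hS', rfl⟩ := hT'
            rw [hP, mem_filter] at hS'
            exact hS'.2
          have hcardPco : Pco.card = P.card := by
            refine card_image_of_injOn (fun x hx y hy hxy => ?_)
            rw [hP, mem_coe, mem_filter] at hx hy
            have hxs := (hA1mem x hx.1).2.2.1
            have hys := (hA1mem y hy.1).2.2.1
            have := congrArg (fun Z => Icc 1 m \ Z) hxy
            simpa [co_co hxs, co_co hys] using this
          -- F2 : complementary pairs
          have hF2 : ∀ S' ∈ A1, ∀ T' ∈ B1, S' ∩ T' = ∅ → T' = Icc 1 m \ S' := by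
            intro S' hS' T' hT' hdisj
            obtain ⟨hinsS, hnS, hsubS, -, -⟩ := hA1mem S' hS'
            obtain ⟨hinsT, hnT, hsubT, -, -, -⟩ := hB1mem T' hT'
            have hdisj' : ∀ z, z ∈ S' → z ∈ T' → False := by
              intro z h1 h2
              have : z ∈ S' ∩ T' := mem_inter.2 ⟨h1, h2⟩
              rw [hdisj] at this
              exact notMem_empty _ this
            have hcover : ∀ x ∈ Icc 1 m, x ∈ S' ∨ x ∈ T' := by
              intro x hx
              by_contra hcon
              push_neg at hcon
              rw [mem_Icc] at hx
              have hxn : x ≠ n := by omega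
              have hcompx := hclA x n (by omega) (by omega) le_rfl _ hinsS
              rw [compress_eval hxn (mem_insert_self _ _)
                (by rw [mem_insert]; push_neg; exact ⟨fun h => hxn h, hcon.1⟩),
                erase_insert hnS] at hcompx
              obtain ⟨z, hz⟩ := hcross _ hcompx _ hinsT
              rw [mem_inter, mem_insert, mem_insert] at hz
              rcases hz.1 with rfl | hz1
              · rcases hz.2 with h | h
                · exact hxn h
                · exact hcon.2 h
              · rcases hz.2 with rfl | h
                · exact hnS hz1
                · exact hdisj' z hz1 h
            refine subset_antisymm ?_ ?_
            · intro x hx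
              rw [mem_sdiff]
              exact ⟨hsubT hx, fun h2 => hdisj' x h2 hx⟩
            · intro x hx
              rw [mem_sdiff] at hx
              rcases hcover x hx.1 with h | h
              · exact absurd h hx.2
              · exact h
          -- (A0, P) disjoint and (A0 ∪ P) crosses B0
          have hA0P : Disjoint A0 P := by
            rw [disjoint_left]
            intro S' hS'0 hS'P
            rw [hP, mem_filter] at hS'P
            obtain ⟨hinsCo, hnCo, hsubCo, -, -, -⟩ := hB1mem _ hS'P.2
            obtain ⟨z, hz⟩ := hcross S' (hA0mem S' hS'0).1 _ hinsCo
            rw [mem_inter, mem_insert] at hz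
            have hzS : z ∈ S' := hz.1
            have hzm : z ∈ Icc 1 m := (hA0mem S' hS'0).2.2.1 hzS
            rcases hz.2 with rfl | hz2
            · rw [mem_Icc] at hzm; omega
            · rw [mem_sdiff] at hz2
              exact hz2.2 hzS
          have hcrossA0P : Cross (A0 ∪ P) B0 := by
            intro x hx y hy
            rw [mem_union] at hx
            rcases hx with hx | hx
            · exact hcrossA0B0 x hx y hy
            · obtain ⟨hins, hn', -, -, -⟩ := hA1mem x (hPsub hx)
              obtain ⟨z, hz⟩ := hcross _ hins y (hB0mem y hy).1
              rw [mem_inter, mem_insert] at hz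
              rcases hz.1 with rfl | hz1
              · exact absurd hz.2 (hB0mem y hy).2.1
              · exact ⟨z, mem_inter.2 ⟨hz1, hz.2⟩⟩
          -- (B0, Pco) disjoint and A0 crosses (B0 ∪ Pco)
          have hB0Pco : Disjoint B0 Pco := by
            rw [disjoint_left]
            intro T' hT'0 hT'P
            rw [hPco, mem_image] at hT'P
            obtain ⟨S', hS'P, rfl⟩ := hT'P
            obtain ⟨hins, hn', -, -, -⟩ := hA1mem S' (hPsub hS'P)
            obtain ⟨z, hz⟩ := hcross _ hins _ (hB0mem _ hT'0).1
            rw [mem_inter, mem_insert] at hz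
            rcases hz.1 with rfl | hz1
            · exact (hB0mem _ hT'0).2.1 hz.2
            · rw [mem_sdiff] at hz
              exact hz.2.2 hz1
          have hcrossA0Pco : Cross A0 (B0 ∪ Pco) := by
            intro x hx y hy
            rw [mem_union] at hy
            rcases hy with hy | hy
            · exact hcrossA0B0 x hx y hy
            · have hyB1 := hPcosub hy
              obtain ⟨hins, hn', -, -, -, -⟩ := hB1mem y hyB1
              obtain ⟨z, hz⟩ := hcross x (hA0mem x hx).1 _ hins
              rw [mem_inter, mem_insert] at hz
              rcases hz.2 with rfl | hz2
              · exact absurd hz.1 (hA0mem x hx).2.1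
              · exact ⟨z, mem_inter.2 ⟨hz.1, hz2⟩⟩
          rcases (A1 \ P).eq_empty_or_nonempty with hA1P | hA1Pne
          · rcases (B1 \ Pco).eq_empty_or_nonempty with hB1P | hB1Pne
            · -- case 4c : A1 = P, B1 = Pco
              have hA1eq : A1.card = P.card :=
                le_antisymm (by
                  have : A1 ⊆ P := by
                    intro x hx
                    by_contra hxP
                    have : x ∈ A1 \ P := mem_sdiff.2 ⟨hx, hxP⟩
                    rw [hA1P] at this
                    exact notMem_empty _ this
                  exact card_le_card this) (card_le_card hPsub)
              have hIH0' : A0.card + (B0 ∪ Pco).card ≤ bnd m r s := by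
                refine ihn m hmlt r s A0 (B0 ∪ Pco) hr hrs hsm
                  (fun S hS => ⟨(hA0mem S hS).2.2.1, (hA0mem S hS).2.2.2.1⟩) ?_
                  hA0ne (hB0ne.mono subset_union_left) hcrossA0Pco
                intro T hT
                rw [mem_union] at hT
                rcases hT with hT | hT
                · exact ⟨(hB0mem T hT).2.2.1, (hB0mem T hT).2.2.2.1⟩
                · obtain ⟨-, -, h3, h4, -, -⟩ := hB1mem T (hPcosub hT)
                  exact ⟨h3, by omega⟩
              rw [card_union_of_disjoint hB0Pco, hcardPco] at hIH0'
              have hB1eq : B1.card = P.card := by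
                have h1 : B1 ⊆ Pco := by
                  intro x hx
                  by_contra hxP
                  have : x ∈ B1 \ Pco := mem_sdiff.2 ⟨hx, hxP⟩
                  rw [hB1P] at this
                  exact notMem_empty _ this
                have := card_le_card h1
                have := card_le_card hPcosub
                omega
              rw [hcardA, hcardB]
              omega
            · -- case 4b : B1 \ Pco ≠ ∅ (and A1 = P, but unused)
              have hcross4b : Cross A1 (B1 \ Pco) := by
                intro x hx y hy
                rw [mem_sdiff] at hy
                rcases eq_empty_or_nonempty (x ∩ y) with hxy | hxy
                · exfalso
                  have := hF2 x hx y hy.1 hxy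
                  apply hy.2
                  rw [hPco, mem_image]
                  refine ⟨x, ?_, this.symm⟩
                  rw [hP, mem_filter]
                  exact ⟨hx, this ▸ hy.1⟩
                · exact hxy
              have hIH2 : A1.card + (B1 \ Pco).card ≤ bnd m (r-1) (s-1) := by
                refine ihn m hmlt (r-1) (s-1) A1 (B1 \ Pco) (by omega) (by omega) (by omega)
                  ?_ ?_ hA1ne hB1Pne hcross4b
                · intro S hS
                  obtain ⟨-, -, h3, h4, -⟩ := hA1mem S hS
                  exact ⟨h3, by omega⟩
                · intro T hT
                  rw [mem_sdiff] at hT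
                  obtain ⟨-, -, h3, h4, -, -⟩ := hB1mem T hT.1
                  exact ⟨h3, by omega⟩
              have hIH0' : A0.card + (B0 ∪ Pco).card ≤ bnd m r s := by
                refine ihn m hmlt r s A0 (B0 ∪ Pco) hr hrs hsm
                  (fun S hS => ⟨(hA0mem S hS).2.2.1, (hA0mem S hS).2.2.2.1⟩) ?_
                  hA0ne (hB0ne.mono subset_union_left) hcrossA0Pco
                intro T hT
                rw [mem_union] at hT
                rcases hT with hT | hT
                · exact ⟨(hB0mem T hT).2.2.1, (hB0mem T hT).2.2.2.1⟩
                · obtain ⟨-, -, h3, h4, -, -⟩ := hB1mem T (hPcosub hT)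
                  exact ⟨h3, by omega⟩
              rw [card_union_of_disjoint hB0Pco, hcardPco] at hIH0'
              have hcardB1P : (B1 \ Pco).card = B1.card - P.card := by
                rw [card_sdiff_of_subset hPcosub, hcardPco]
              have hstep : bnd m (r-1) (s-1) ≤ Δ := by
                have := bnd_step_le m r s hr2 hrs hsm
                have hb : bnd m (r-1) (s-1) =
                    1 + ∑ i ∈ Icc 1 (s-1), (m.choose i - (m-(r-1)).choose i) := rfl
                omega
              have hPB1 : P.card ≤ B1.card := hcardPco ▸ card_le_card hPcosub
              rw [hcardA, hcardB]
              omega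
          · -- case 4a : A1 \ P ≠ ∅
            have hcross4a : Cross (A1 \ P) B1 := by
              intro x hx y hy
              rw [mem_sdiff] at hx
              rcases eq_empty_or_nonempty (x ∩ y) with hxy | hxy
              · exfalso
                have := hF2 x hx.1 y hy hxy
                apply hx.2
                rw [hP, mem_filter]
                exact ⟨hx.1, this ▸ hy⟩
              · exact hxy
            have hIH2 : (A1 \ P).card + B1.card ≤ bnd m (r-1) (s-1) := by
              refine ihn m hmlt (r-1) (s-1) (A1 \ P) B1 (by omega) (by omega) (by omega)
                ?_ ?_ hA1Pne hB1ne hcross4a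
              · intro S hS
                rw [mem_sdiff] at hS
                obtain ⟨-, -, h3, h4, -⟩ := hA1mem S hS.1
                exact ⟨h3, by omega⟩
              · intro T hT
                obtain ⟨-, -, h3, h4, -, -⟩ := hB1mem T hT
                exact ⟨h3, by omega⟩
            have hIH0' : (A0 ∪ P).card + B0.card ≤ bnd m r s := by
              refine ihn m hmlt r s (A0 ∪ P) B0 hr hrs hsm ?_
                (fun T hT => ⟨(hB0mem T hT).2.2.1, (hB0mem T hT).2.2.2.1⟩)
                (hA0ne.mono subset_union_left) hB0ne hcrossA0P
              intro S hS
              rw [mem_union] at hS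
              rcases hS with hS | hS
              · exact ⟨(hA0mem S hS).2.2.1, (hA0mem S hS).2.2.2.1⟩
              · obtain ⟨-, -, h3, h4, -⟩ := hA1mem S (hPsub hS)
                exact ⟨h3, by omega⟩
            rw [card_union_of_disjoint hA0P] at hIH0'
            have hcardA1P : (A1 \ P).card = A1.card - P.card := card_sdiff_of_subset hPsub
            have hstep : bnd m (r-1) (s-1) ≤ Δ := by
              have := bnd_step_le m r s hr2 hrs hsm
              have hb : bnd m (r-1) (s-1) =
                  1 + ∑ i ∈ Icc 1 (s-1), (m.choose i - (m-(r-1)).choose i) := rfl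
              omega
            have hPA1 : P.card ≤ A1.card := card_le_card hPsub
            rw [hcardA, hcardB]
            omega

end BF

open Finset

theorem borg_feghali_main (n r s : ℕ) (hn : 1 ≤ n) (hr : 1 ≤ r) (hrs : r ≤ s)
    (𝒜 ℬ : Finset (Finset ℕ))
    (h𝒜 : ∀ A ∈ 𝒜, A ⊆ Finset.Icc 1 n ∧ A.card ≤ r)
    (hℬ : ∀ B ∈ ℬ, B ⊆ Finset.Icc 1 n ∧ B.card ≤ s)
    (h𝒜ne : 𝒜.Nonempty) (hℬne : ℬ.Nonempty)
    (hcross : ∀ A ∈ 𝒜, ∀ B ∈ ℬ, (A ∩ B).Nonempty) :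
    𝒜.card + ℬ.card ≤ 1 + ∑ i ∈ Finset.Icc 1 s, (n.choose i - (n - r).choose i) := by
  have hcard : ∀ (F : Finset (Finset ℕ)), (∀ S ∈ F, S ⊆ Finset.Icc 1 n) →
      ∀ S ∈ F, S.card ≤ n := by
    intro F hF S hS
    have := Finset.card_le_card (hF S hS)
    rwa [Nat.card_Icc, Nat.add_sub_cancel] at this
  have hmain := BF.main n (min r n) (min s n) 𝒜 ℬ (by omega) (by omega) (by omega)
    (fun S hS => ⟨(h𝒜 S hS).1, le_min (h𝒜 S hS).2 (hcard 𝒜 (fun S hS => (h𝒜 S hS).1) S hS)⟩)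
    (fun S hS => ⟨(hℬ S hS).1, le_min (hℬ S hS).2 (hcard ℬ (fun S hS => (hℬ S hS).1) S hS)⟩)
    h𝒜ne hℬne hcross
  have heq : BF.bnd n (min r n) (min s n)
      = 1 + ∑ i ∈ Finset.Icc 1 s, (n.choose i - (n - r).choose i) := by
    unfold BF.bnd
    congr 1
    have h1 : n - min r n = n - r := by omega
    rw [h1]
    refine Finset.sum_subset (Finset.Icc_subset_Icc le_rfl (min_le_left s n)) ?_
    intro x hx hnx
    rw [Finset.mem_Icc] at hx hnx
    have hxn : n < x := by omega
    rw [Nat.choose_eq_zero_of_lt hxn]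
    simp
  rw [heq] at hmain
  exact hmain
end

section
/- Let A and B be compressed cross-intersecting families of subsets of [n] with n ≥ 2. Let A₁ = {A \ {n} : n ∈ A ∈ A} and B₁ = {B \ {n} : n ∈ B ∈ B}. If C ∈ A₁ and some member of B₁ is disjoint from C, then [n−1] \ C is the unique member of B₁ disjoint from C. -/
open Finset

def Compressed (n : ℕ) (F : Finset (Finset ℕ)) : Prop :=
  ∀ S ∈ F, ∀ i ∈ Finset.Icc 1 n, ∀ j ∈ Finset.Icc 1 n,
    i < j → j ∈ S → i ∉ S → insert i (S.erase j) ∈ F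

theorem unique_disjoint_set (n : ℕ) (hn : 2 ≤ n)
    (𝒜 ℬ : Finset (Finset ℕ))
    (h𝒜 : 𝒜 ⊆ (Finset.Icc 1 n).powerset) (hℬ : ℬ ⊆ (Finset.Icc 1 n).powerset)
    (h𝒜c : Compressed n 𝒜) (hℬc : Compressed n ℬ)
    (hcross : ∀ A ∈ 𝒜, ∀ B ∈ ℬ, (A ∩ B).Nonempty)
    (C : Finset ℕ)
    (hC : C ∈ (𝒜.filter (fun A => n ∈ A)).image (fun A => A.erase n))
    (hdisj : ∃ B ∈ (ℬ.filter (fun B => n ∈ B)).image (fun B => B.erase n),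
      B ∩ C = ∅) :
    (Finset.Icc 1 (n - 1)) \ C ∈
        (ℬ.filter (fun B => n ∈ B)).image (fun B => B.erase n) ∧
    ∀ B ∈ (ℬ.filter (fun B => n ∈ B)).image (fun B => B.erase n),
      B ∩ C = ∅ → B = (Finset.Icc 1 (n - 1)) \ C := by
  obtain ⟨A, hAf, hAC⟩ := Finset.mem_image.mp hC
  obtain ⟨hA𝒜, hnA⟩ := Finset.mem_filter.mp hAf
  have hAeq : A = insert n C := by rw [← hAC, Finset.insert_erase hnA]
  have key : ∀ B ∈ ℬ, n ∈ B → (B.erase n) ∩ C = ∅ →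
      B.erase n = (Finset.Icc 1 (n - 1)) \ C := by
    intro B hBℬ hnB hdB
    have hBsub : B ⊆ Finset.Icc 1 n := Finset.mem_powerset.mp (hℬ hBℬ)
    apply Finset.Subset.antisymm
    · intro x hx
      have hxn : x ≠ n := Finset.ne_of_mem_erase hx
      have hxB : x ∈ B := Finset.mem_of_mem_erase hx
      have hxI := Finset.mem_Icc.mp (hBsub hxB)
      refine Finset.mem_sdiff.mpr ⟨Finset.mem_Icc.mpr ⟨hxI.1, by omega⟩, ?_⟩
      intro hxC
      have : x ∈ (B.erase n) ∩ C := Finset.mem_inter.mpr ⟨hx, hxC⟩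
      rw [hdB] at this
      exact absurd this (Finset.notMem_empty x)
    · intro x hx
      obtain ⟨hxI, hxC⟩ := Finset.mem_sdiff.mp hx
      have hxI' := Finset.mem_Icc.mp hxI
      by_contra hxB'
      have hxn : x ≠ n := by omega
      have hxB : x ∉ B := fun h => hxB' (Finset.mem_erase.mpr ⟨hxn, h⟩)
      have hmem : insert x (B.erase n) ∈ ℬ := by
        apply hℬc B hBℬ x (Finset.mem_Icc.mpr ⟨hxI'.1, by omega⟩)
          n (Finset.mem_Icc.mpr ⟨by omega, le_refl n⟩) (by omega) hnB hxB
      obtain ⟨y, hy⟩ := hcross A hA𝒜 _ hmem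
      obtain ⟨hyA, hyB⟩ := Finset.mem_inter.mp hy
      rw [hAeq] at hyA
      rcases Finset.mem_insert.mp hyA with rfl | hyC
      · rcases Finset.mem_insert.mp hyB with h | h
        · exact hxn h.symm
        · exact (Finset.mem_erase.mp h).1 rfl
      · rcases Finset.mem_insert.mp hyB with rfl | h
        · exact hxC hyC
        · have : y ∈ (B.erase n) ∩ C := Finset.mem_inter.mpr ⟨h, hyC⟩
          rw [hdB] at this
          exact absurd this (Finset.notMem_empty y)
  obtain ⟨B₀, hB₀m, hB₀d⟩ := hdisj
  obtain ⟨B, hBf, rfl⟩ := Finset.mem_image.mp hB₀m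
  obtain ⟨hBℬ, hnB⟩ := Finset.mem_filter.mp hBf
  have heq := key B hBℬ hnB hB₀d
  constructor
  · exact heq ▸ hB₀m
  · intro B' hB'm hB'd
    obtain ⟨B₁, hB₁f, rfl⟩ := Finset.mem_image.mp hB'm
    obtain ⟨hB₁ℬ, hnB₁⟩ := Finset.mem_filter.mp hB₁f
    exact key B₁ hB₁ℬ hnB₁ hB'd
end

section
/- Let A and B be compressed cross-intersecting families of subsets of [n] with n ≥ 2. Let A₁ = {A \ {n} : n ∈ A ∈ A}, B₀ = {B ∈ B : n ∉ B}, B₁ = {B \ {n} : n ∈ B ∈ B}, and C = {A ∈ A₁ : A ∩ B = ∅ for some B ∈ B₁}. Then for every C ∈ C, the set [n−1] \ C is not in B₀; in particular B₀ and {[n−1] \ C : C ∈ C} are disjoint. -/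
open Finset

theorem complement_not_in_B0 (n : ℕ) (hn : 2 ≤ n)
    (𝒜 ℬ : Finset (Finset ℕ))
    (h𝒜 : 𝒜 ⊆ (Finset.Icc 1 n).powerset) (hℬ : ℬ ⊆ (Finset.Icc 1 n).powerset)
    (h𝒜c : Compressed n 𝒜) (hℬc : Compressed n ℬ)
    (hcross : ∀ A ∈ 𝒜, ∀ B ∈ ℬ, (A ∩ B).Nonempty) :
    (∀ C ∈ ((𝒜.filter (fun A => n ∈ A)).image (fun A => A.erase n)).filter
        (fun A => ∃ B ∈ (ℬ.filter (fun B => n ∈ B)).image (fun B => B.erase n),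
          A ∩ B = ∅),
      (Finset.Icc 1 (n - 1)) \ C ∉ ℬ.filter (fun B => n ∉ B)) ∧
    Disjoint (ℬ.filter (fun B => n ∉ B))
      ((((𝒜.filter (fun A => n ∈ A)).image (fun A => A.erase n)).filter
        (fun A => ∃ B ∈ (ℬ.filter (fun B => n ∈ B)).image (fun B => B.erase n),
          A ∩ B = ∅)).image (fun C => (Finset.Icc 1 (n - 1)) \ C)) := by
  have key : ∀ C ∈ ((𝒜.filter (fun A => n ∈ A)).image (fun A => A.erase n)).filter
        (fun A => ∃ B ∈ (ℬ.filter (fun B => n ∈ B)).image (fun B => B.erase n),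
          A ∩ B = ∅),
      (Finset.Icc 1 (n - 1)) \ C ∉ ℬ.filter (fun B => n ∉ B) := by
    intro C hC hD
    rw [mem_filter, mem_image] at hC
    obtain ⟨⟨A, hA, rfl⟩, -⟩ := hC
    rw [mem_filter] at hA hD
    obtain ⟨hA𝒜, hnA⟩ := hA
    obtain ⟨hDℬ, hnD⟩ := hD
    obtain ⟨x, hx⟩ := hcross A hA𝒜 _ hDℬ
    rw [mem_inter, mem_sdiff] at hx
    obtain ⟨hxA, hxI, hxC⟩ := hx
    exact hxC (Finset.mem_erase.2 ⟨by rintro rfl; rw [mem_Icc] at hxI; omega, hxA⟩)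
  refine ⟨key, ?_⟩
  rw [Finset.disjoint_right]
  intro D hD hDB
  rw [mem_image] at hD
  obtain ⟨C, hC, rfl⟩ := hD
  exact key C hC hDB
end

section
/- (Frankl–Tokushige) Let 1 ≤ r ≤ s and n ≥ r + s. If A ⊆ ([n] choose r) and B ⊆ ([n] choose s) are non-empty and cross-intersecting, then |A| + |B| ≤ 1 + C(n,s) − C(n−r,s). -/
open Finset

namespace FT2

/-! ### Binomial lemmas -/

lemma choose_le_choose_of_le {N a b : ℕ} (hab : a ≤ b) (h : a + b ≤ N) :
    N.choose a ≤ N.choose b := by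
  induction N generalizing a b with
  | zero =>
    have : a = 0 ∧ b = 0 := by omega
    simp [this.1, this.2]
  | succ M ih =>
    rcases Nat.eq_zero_or_pos a with rfl | ha
    · have := Nat.choose_pos (show b ≤ M + 1 by omega); rw [Nat.choose_zero_right]; omega
    rcases eq_or_lt_of_le (show a + b ≤ M + 1 from h) with heq | hlt
    · have hbM : b = (M+1) - a := by omega
      rw [hbM, Nat.choose_symm (by omega)]
    · obtain ⟨a', rfl⟩ := Nat.exists_eq_add_of_le ha
      have hb : 1 ≤ b := by omega
      obtain ⟨b', rfl⟩ := Nat.exists_eq_add_of_le hb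
      rw [show 1 + a' = a' + 1 by ring, show 1 + b' = b' + 1 by ring] at *
      rw [Nat.choose_succ_succ, Nat.choose_succ_succ]
      have h1 : M.choose a' ≤ M.choose b' := ih (by omega) (by omega)
      have h2 : M.choose (a'+1) ≤ M.choose (b'+1) := ih (by omega) (by omega)
      simp only [Nat.succ_eq_add_one]
      omega

lemma pascal {d s : ℕ} (hd : 1 ≤ d) (hs : 1 ≤ s) :
    d.choose s = (d-1).choose (s-1) + (d-1).choose s := by
  rcases d with _ | d'
  · omega
  rcases s with _ | s'
  · omega
  simp [Nat.choose_succ_succ]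

/-! ### The split of a family along an element -/

variable {α : Type*} [DecidableEq α]

/-- members avoiding `x`. -/
def fam0 (x : α) (𝒟 : Finset (Finset α)) : Finset (Finset α) := 𝒟.filter (fun D => x ∉ D)

/-- links: members containing `x`, with `x` removed. -/
def fam1 (x : α) (𝒟 : Finset (Finset α)) : Finset (Finset α) :=
  (𝒟.filter (fun D => x ∈ D)).image (fun D => D.erase x)

variable {x : α} {𝒟 : Finset (Finset α)}

lemma mem_fam0 {D : Finset α} : D ∈ fam0 x 𝒟 ↔ D ∈ 𝒟 ∧ x ∉ D := mem_filter

lemma mem_fam1 {E : Finset α} : E ∈ fam1 x 𝒟 ↔ x ∉ E ∧ insert x E ∈ 𝒟 := by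
  constructor
  · intro hE
    simp only [fam1, mem_image, mem_filter] at hE
    obtain ⟨D, ⟨hD, hxD⟩, rfl⟩ := hE
    exact ⟨notMem_erase _ _, by rwa [insert_erase hxD]⟩
  · intro ⟨hxE, hE⟩
    simp only [fam1, mem_image, mem_filter]
    exact ⟨insert x E, ⟨hE, mem_insert_self _ _⟩, by rw [erase_insert hxE]⟩

lemma card_fam_split : 𝒟.card = (fam0 x 𝒟).card + (fam1 x 𝒟).card := by
  have h1 : (fam1 x 𝒟).card = (𝒟.filter (fun D => x ∈ D)).card := by
    apply card_image_of_injOn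
    intro D hD D' hD' h
    rw [mem_coe, mem_filter] at hD hD'
    simp only at h
    rw [← insert_erase hD.2, h, insert_erase hD'.2]
  rw [h1, fam0, add_comm, card_filter_add_card_filter_not]


/-! ### Compression machinery -/

section Compression

open scoped FinsetFamily

lemma compress_eq {i j : ℕ} (hij : i ≠ j) {A : Finset ℕ} (hi : i ∉ A) (hj : j ∈ A) :
    UV.compress {i} {j} A = insert i (A.erase j) := by
  rw [UV.compress_of_disjoint_of_le (by simpa using hi) (by simpa using hj)]
  ext y
  simp only [sup_eq_union, sdiff_singleton_eq_erase, mem_erase, mem_union, mem_singleton,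
    mem_insert]
  constructor
  · rintro ⟨hyj, hy | rfl⟩
    · exact Or.inr ⟨hyj, hy⟩
    · exact Or.inl rfl
  · rintro (rfl | ⟨hyj, hy⟩)
    · exact ⟨hij, Or.inr rfl⟩
    · exact ⟨hyj, Or.inl hy⟩

lemma compress_eq_self {i j : ℕ} {A : Finset ℕ} (h : ¬ (i ∉ A ∧ j ∈ A)) :
    UV.compress {i} {j} A = A := by
  rw [UV.compress, if_neg]
  intro ⟨h1, h2⟩
  exact h ⟨by simpa using h1, by simpa using h2⟩

lemma mem_compression_cases {i j : ℕ} (hij : i ≠ j) {𝒜 : Finset (Finset ℕ)} {A : Finset ℕ}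
    (h : A ∈ 𝓒 {i} {j} 𝒜) :
    (A ∈ 𝒜 ∧ UV.compress {i} {j} A ∈ 𝒜) ∨
    (A ∉ 𝒜 ∧ ∃ a ∈ 𝒜, i ∉ a ∧ j ∈ a ∧ A = insert i (a.erase j)) := by
  rw [UV.mem_compression] at h
  rcases h with h | ⟨hA, a, ha, hc⟩
  · exact Or.inl h
  · right
    refine ⟨hA, a, ha, ?_⟩
    by_cases hcond : i ∉ a ∧ j ∈ a
    · exact ⟨hcond.1, hcond.2, by rw [← hc, compress_eq hij hcond.1 hcond.2]⟩
    · rw [compress_eq_self hcond] at hc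
      exact absurd (hc ▸ ha) hA

lemma cross_compression_aux {i j : ℕ} (hij : i ≠ j) {𝒜 ℬ : Finset (Finset ℕ)}
    (hcross : ∀ A ∈ 𝒜, ∀ B ∈ ℬ, (A ∩ B).Nonempty)
    {A' : Finset ℕ} (hA1 : A' ∈ 𝒜) (hA2 : UV.compress {i} {j} A' ∈ 𝒜)
    {b : Finset ℕ} (hb : b ∈ ℬ) (hib : i ∉ b) (hjb : j ∈ b) :
    (A' ∩ insert i (b.erase j)).Nonempty := by
  obtain ⟨y, hy⟩ := hcross A' hA1 b hb
  rw [mem_inter] at hy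
  by_cases hyj : y = j
  · subst hyj
    by_cases hiA : i ∈ A'
    · exact ⟨i, mem_inter.2 ⟨hiA, mem_insert_self _ _⟩⟩
    · have hA'' : insert i (A'.erase y) ∈ 𝒜 := by
        rwa [compress_eq hij hiA hy.1] at hA2
      obtain ⟨z, hz⟩ := hcross _ hA'' b hb
      rw [mem_inter, mem_insert, mem_erase] at hz
      rcases hz.1 with rfl | ⟨hzj, hzA⟩
      · exact absurd hz.2 hib
      · exact ⟨z, mem_inter.2 ⟨hzA, mem_insert_of_mem (mem_erase.2 ⟨hzj, hz.2⟩)⟩⟩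
  · exact ⟨y, mem_inter.2 ⟨hy.1, mem_insert_of_mem (mem_erase.2 ⟨hyj, hy.2⟩)⟩⟩

lemma cross_compression {i j : ℕ} (hij : i ≠ j) {𝒜 ℬ : Finset (Finset ℕ)}
    (hcross : ∀ A ∈ 𝒜, ∀ B ∈ ℬ, (A ∩ B).Nonempty) :
    ∀ A ∈ 𝓒 {i} {j} 𝒜, ∀ B ∈ 𝓒 {i} {j} ℬ, (A ∩ B).Nonempty := by
  have hcross' : ∀ B ∈ ℬ, ∀ A ∈ 𝒜, (B ∩ A).Nonempty := by
    intro B hB A hA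
    rw [inter_comm]
    exact hcross A hA B hB
  intro A hA B hB
  rcases mem_compression_cases hij hA with ⟨hA1, hA2⟩ | ⟨-, a, ha, hia, hja, rfl⟩
  · rcases mem_compression_cases hij hB with ⟨hB1, -⟩ | ⟨-, b, hb, hib, hjb, rfl⟩
    · exact hcross _ hA1 _ hB1
    · exact cross_compression_aux hij hcross hA1 hA2 hb hib hjb
  · rcases mem_compression_cases hij hB with ⟨hB1, hB2⟩ | ⟨-, b, hb, hib, hjb, rfl⟩
    · rw [inter_comm]
      exact cross_compression_aux hij hcross' hB1 hB2 ha hia hja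
    · exact ⟨i, mem_inter.2 ⟨mem_insert_self _ _, mem_insert_self _ _⟩⟩

lemma compression_mems {i j n r : ℕ} (h1 : 1 ≤ i) (hij : i < j) (hjn : j ≤ n)
    {𝒜 : Finset (Finset ℕ)} (hmem : ∀ A ∈ 𝒜, A ⊆ Icc 1 n ∧ A.card = r) :
    ∀ A ∈ 𝓒 {i} {j} 𝒜, A ⊆ Icc 1 n ∧ A.card = r := by
  intro A hA
  rcases mem_compression_cases hij.ne hA with ⟨hA1, -⟩ | ⟨-, a, ha, hia, hja, rfl⟩
  · exact hmem A hA1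
  · obtain ⟨hsub, hcard⟩ := hmem a ha
    constructor
    · intro y hy
      rcases mem_insert.1 hy with rfl | hy'
      · exact mem_Icc.2 ⟨h1, by omega⟩
      · exact hsub (erase_subset _ _ hy')
    · rw [card_insert_of_notMem (fun h => hia (erase_subset _ _ h)),
        card_erase_of_mem hja, hcard]
      have : 1 ≤ a.card := card_pos.2 ⟨j, hja⟩
      omega

/-! measure -/

def fmeasure (𝒜 : Finset (Finset ℕ)) : ℕ := 𝒜.sum (fun A => A.sum id)

lemma sum_compress_add {i j : ℕ} (hij : i ≠ j) {A : Finset ℕ} (hi : i ∉ A) (hj : j ∈ A) :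
    (insert i (A.erase j)).sum id + j = A.sum id + i := by
  rw [sum_insert (fun h => hi (erase_subset _ _ h))]
  have h2 : (A.erase j).sum id + j = A.sum id := by
    simpa using Finset.sum_erase_add A id hj
  simp only [id] at h2 ⊢
  omega

lemma compression_eq_union (i j : ℕ) (𝒜 : Finset (Finset ℕ)) :
    𝓒 {i} {j} 𝒜 = 𝒜.filter (fun a => UV.compress {i} {j} a ∈ 𝒜) ∪
      (𝒜.filter (fun a => UV.compress {i} {j} a ∉ 𝒜)).image (UV.compress {i} {j}) := by
  rw [UV.compression]
  congr 1
  ext A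
  simp only [mem_filter, mem_image]
  constructor
  · rintro ⟨⟨a, ha, rfl⟩, hA⟩
    exact ⟨a, ⟨ha, hA⟩, rfl⟩
  · rintro ⟨a, ⟨ha, hA⟩, rfl⟩
    exact ⟨⟨a, ha, rfl⟩, hA⟩

lemma fmeasure_compression {i j : ℕ} (hij : i < j) (𝒜 : Finset (Finset ℕ)) :
    fmeasure (𝓒 {i} {j} 𝒜) ≤ fmeasure 𝒜 ∧
      (𝓒 {i} {j} 𝒜 ≠ 𝒜 → fmeasure (𝓒 {i} {j} 𝒜) < fmeasure 𝒜) := by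
  classical
  set c := UV.compress ({i} : Finset ℕ) {j} with hc
  set P := 𝒜.filter (fun a => c a ∈ 𝒜) with hP
  set R := 𝒜.filter (fun a => c a ∉ 𝒜) with hR
  have hsplit : fmeasure 𝒜 = P.sum (fun A => A.sum id) + R.sum (fun A => A.sum id) := by
    rw [fmeasure, ← sum_filter_add_sum_filter_not 𝒜 (fun a => c a ∈ 𝒜)]
  have hinj : Set.InjOn c R := by
    have := UV.compress_injOn (u := ({i} : Finset ℕ)) (v := ({j} : Finset ℕ)) (s := 𝒜)
    intro x hx y hy hxy
    exact this (by simpa [hR] using hx) (by simpa [hR] using hy) hxy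
  have hterm : ∀ a ∈ R, (c a).sum id + j = a.sum id + i := by
    intro a haR
    rw [hR, mem_filter] at haR
    by_cases hcond : i ∉ a ∧ j ∈ a
    · rw [hc, compress_eq hij.ne hcond.1 hcond.2]
      exact sum_compress_add hij.ne hcond.1 hcond.2
    · exact absurd (by rw [hc, compress_eq_self hcond]; exact haR.1) haR.2
  have hdisj : Disjoint P (R.image c) := by
    rw [disjoint_right]
    intro A hA hAP
    obtain ⟨a, haR, rfl⟩ := mem_image.1 hA
    rw [hR, mem_filter] at haR
    exact haR.2 ((mem_filter.1 (hP ▸ hAP)).1)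
  have hsum𝓒 : fmeasure (𝓒 {i} {j} 𝒜)
      = P.sum (fun A => A.sum id) + R.sum (fun a => (c a).sum id) := by
    rw [fmeasure, compression_eq_union, sum_union hdisj,
      sum_image (fun x hx y hy hxy => hinj hx hy hxy)]
  constructor
  · rw [hsplit, hsum𝓒]
    apply Nat.add_le_add_left
    apply sum_le_sum
    intro a ha
    have := hterm a ha
    omega
  · intro hne
    have hRne : R.Nonempty := by
      rw [nonempty_iff_ne_empty]
      intro h
      apply hne
      rw [compression_eq_union, ← hP, ← hR, h, image_empty, union_empty]
      have : P = 𝒜 := by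
        rw [hP]
        apply filter_eq_self.2
        intro a ha
        by_contra hca
        have : a ∈ R := by rw [hR, mem_filter]; exact ⟨ha, hca⟩
        rw [h] at this
        exact notMem_empty _ this
      rw [this]
    rw [hsplit, hsum𝓒]
    apply Nat.add_lt_add_left
    apply sum_lt_sum_of_nonempty hRne
    intro a ha
    have := hterm a ha
    omega

end Compression


section Stable

open scoped FinsetFamily

/-- Stability under all compressions within the ground set `Icc 1 n`. -/
def Stab (n : ℕ) (𝒜 : Finset (Finset ℕ)) : Prop :=
  ∀ i j : ℕ, 1 ≤ i → i < j → j ≤ n → UV.IsCompressed {i} {j} 𝒜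

lemma stab_apply {n i j : ℕ} {𝒜 : Finset (Finset ℕ)} (hS : Stab n 𝒜)
    (h1 : 1 ≤ i) (h2 : i < j) (h3 : j ≤ n) {A : Finset ℕ} (hA : A ∈ 𝒜) :
    UV.compress {i} {j} A ∈ 𝒜 := by
  have := UV.compress_mem_compression (u := ({i} : Finset ℕ)) (v := ({j} : Finset ℕ)) hA
  rwa [(hS i j h1 h2 h3).eq] at this

/-- a stable nonempty uniform family on `Icc 1 n` contains the initial interval `Icc 1 r`. -/
lemma stab_min_mem {n r : ℕ} {𝒜 : Finset (Finset ℕ)} (hS : Stab n 𝒜)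
    (hmem : ∀ A ∈ 𝒜, A ⊆ Icc 1 n ∧ A.card = r) (hne : 𝒜.Nonempty) (hr1 : 1 ≤ r) :
    Icc 1 r ∈ 𝒜 := by
  suffices h : ∀ k, ∀ A ∈ 𝒜, A.sum id ≤ k → Icc 1 r ∈ 𝒜 by
    obtain ⟨A, hA⟩ := hne
    exact h (A.sum id) A hA le_rfl
  intro k
  induction k with
  | zero =>
    intro A hA hsum
    exfalso
    have hcard : A.card = r := (hmem A hA).2
    obtain ⟨a, ha⟩ := card_pos.1 (show 0 < A.card by omega)
    have h1a : 1 ≤ a := (mem_Icc.1 ((hmem A hA).1 ha)).1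
    have h3 : a ≤ A.sum id := single_le_sum (f := id) (fun x _ => Nat.zero_le (id x)) ha
    omega
  | succ k ih =>
    intro A hA hsum
    by_cases hAr : A = Icc 1 r
    · exact hAr ▸ hA
    · have hcard : A.card = r := (hmem A hA).2
      have hsub : A ⊆ Icc 1 n := (hmem A hA).1
      have hIccr : (Icc 1 r).card = r := by rw [Nat.card_Icc]; omega
      have hns : ¬ Icc 1 r ⊆ A := by
        intro hsubr
        exact hAr (eq_of_subset_of_card_le hsubr (by omega)).symm
      have hns' : ¬ A ⊆ Icc 1 r := by
        intro hsubr
        exact hAr (eq_of_subset_of_card_le hsubr (by omega))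
      obtain ⟨i, hi_mem, hi_not⟩ := not_subset.1 hns
      obtain ⟨j, hj_mem, hj_not⟩ := not_subset.1 hns'
      have hi1 : 1 ≤ i := (mem_Icc.1 hi_mem).1
      have hir : i ≤ r := (mem_Icc.1 hi_mem).2
      have hj1 : 1 ≤ j := (mem_Icc.1 (hsub hj_mem)).1
      have hjn : j ≤ n := (mem_Icc.1 (hsub hj_mem)).2
      have hij : i < j := by
        rcases mem_Icc.1 (hsub hj_mem) with ⟨h1, h2⟩
        by_contra h
        exact hj_not (mem_Icc.2 ⟨hj1, by omega⟩)
      have hA'' : UV.compress {i} {j} A ∈ 𝒜 := stab_apply hS hi1 hij hjn hA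
      rw [compress_eq hij.ne hi_not hj_mem] at hA''
      apply ih _ hA''
      have := sum_compress_add hij.ne hi_not hj_mem
      omega

/-- counting: a `t`-uniform family on `Icc 1 m` all whose members meet `Icc 1 r`. -/
lemma card_le_meets {m r t : ℕ} {ℱ : Finset (Finset ℕ)} (hrm : r ≤ m)
    (hmem : ∀ F ∈ ℱ, F ⊆ Icc 1 m ∧ F.card = t)
    (hmeet : ∀ F ∈ ℱ, (F ∩ Icc 1 r).Nonempty) :
    ℱ.card + (m - r).choose t ≤ m.choose t := by
  have hsub2 : (Icc (r+1) m).powersetCard t ⊆ (Icc 1 m).powersetCard t := by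
    intro F hF
    rw [mem_powersetCard] at hF ⊢
    refine ⟨fun y hy => ?_, hF.2⟩
    have := mem_Icc.1 (hF.1 hy)
    exact mem_Icc.2 ⟨by omega, this.2⟩
  have hℱsub : ℱ ⊆ (Icc 1 m).powersetCard t \ (Icc (r+1) m).powersetCard t := by
    intro F hF
    rw [mem_sdiff, mem_powersetCard]
    refine ⟨⟨(hmem F hF).1, (hmem F hF).2⟩, ?_⟩
    intro hcon
    rw [mem_powersetCard] at hcon
    obtain ⟨y, hy⟩ := hmeet F hF
    rw [mem_inter] at hy
    have h1 := mem_Icc.1 (hcon.1 hy.1)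
    have h2 := mem_Icc.1 hy.2
    omega
  have hcard := card_le_card hℱsub
  rw [card_sdiff_of_subset hsub2, card_powersetCard, card_powersetCard, Nat.card_Icc, Nat.card_Icc] at hcard
  have hle := card_le_card hsub2
  rw [card_powersetCard, card_powersetCard, Nat.card_Icc, Nat.card_Icc] at hle
  have e1 : m + 1 - 1 = m := by omega
  have e2 : m + 1 - (r + 1) = m - r := by omega
  rw [e1, e2] at hcard hle
  omega

end Stable


section Main

open scoped FinsetFamily

def FTmain (n : ℕ) : Prop := ∀ (r s : ℕ) (𝒜 ℬ : Finset (Finset ℕ)), 1 ≤ r → r ≤ s → r + s ≤ n →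
  (∀ A ∈ 𝒜, A ⊆ Icc 1 n ∧ A.card = r) → (∀ B ∈ ℬ, B ⊆ Icc 1 n ∧ B.card = s) →
  𝒜.Nonempty → ℬ.Nonempty → (∀ A ∈ 𝒜, ∀ B ∈ ℬ, (A ∩ B).Nonempty) →
  𝒜.card + ℬ.card + (n - r).choose s ≤ 1 + n.choose s

lemma base_case {n r s : ℕ} {𝒜 ℬ : Finset (Finset ℕ)} (hr : 1 ≤ r) (hrs : r ≤ s)
    (hn : r + s = n)
    (hmA : ∀ A ∈ 𝒜, A ⊆ Icc 1 n ∧ A.card = r) (hmB : ∀ B ∈ ℬ, B ⊆ Icc 1 n ∧ B.card = s)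
    (hcross : ∀ A ∈ 𝒜, ∀ B ∈ ℬ, (A ∩ B).Nonempty) :
    𝒜.card + ℬ.card + (n - r).choose s ≤ 1 + n.choose s := by
  have hIcc : (Icc 1 n).card = n := by rw [Nat.card_Icc]; omega
  set ℬ' := ℬ.image (fun B => Icc 1 n \ B) with hℬ'
  have hinv : ∀ B ∈ ℬ, Icc 1 n \ (Icc 1 n \ B) = B := by
    intro B hB
    rw [sdiff_sdiff_right_self, inf_eq_inter, inter_eq_right.2 (hmB B hB).1]
  have hB'card : ℬ'.card = ℬ.card := by
    apply card_image_of_injOn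
    intro B hB1 B' hB2 h
    simp only at h
    rw [← hinv B hB1, h, hinv B' hB2]
  have hdisj : Disjoint 𝒜 ℬ' := by
    rw [disjoint_left]
    intro A hA hA'
    obtain ⟨B, hB, rfl⟩ := mem_image.1 hA'
    obtain ⟨y, hy⟩ := hcross _ hA _ hB
    rw [mem_inter, mem_sdiff] at hy
    exact hy.1.2 hy.2
  have hsub : 𝒜 ∪ ℬ' ⊆ (Icc 1 n).powersetCard r := by
    intro C hC
    rcases mem_union.1 hC with h | h
    · exact mem_powersetCard.2 ⟨(hmA C h).1, (hmA C h).2⟩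
    · obtain ⟨B, hB, rfl⟩ := mem_image.1 h
      refine mem_powersetCard.2 ⟨sdiff_subset, ?_⟩
      rw [card_sdiff_of_subset (hmB B hB).1, hIcc, (hmB B hB).2]
      omega
  have hcount := card_le_card hsub
  rw [card_union_of_disjoint hdisj, card_powersetCard, hIcc, hB'card] at hcount
  have hsymm : n.choose r = n.choose s := by
    rw [show r = n - s by omega, Nat.choose_symm (by omega)]
  have h1 : (n - r).choose s = 1 := by
    rw [show n - r = s by omega, Nat.choose_self]
  omega

lemma stable_case (n : ℕ) (ihn : ∀ m, m < n → FTmain m) {r s : ℕ}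
    {𝒜 ℬ : Finset (Finset ℕ)} (hr : 1 ≤ r) (hrs : r ≤ s) (hn : r + s ≤ n)
    (hmA : ∀ A ∈ 𝒜, A ⊆ Icc 1 n ∧ A.card = r) (hmB : ∀ B ∈ ℬ, B ⊆ Icc 1 n ∧ B.card = s)
    (hAne : 𝒜.Nonempty) (hBne : ℬ.Nonempty)
    (hcross : ∀ A ∈ 𝒜, ∀ B ∈ ℬ, (A ∩ B).Nonempty)
    (hSA : Stab n 𝒜) (hSB : Stab n ℬ) :
    𝒜.card + ℬ.card + (n - r).choose s ≤ 1 + n.choose s := by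
  rcases eq_or_lt_of_le hn with heq | hlt
  · exact base_case hr hrs heq hmA hmB hcross
  -- n > r + s
  have hs1 : 1 ≤ s := by omega
  have hrmem : Icc 1 r ∈ 𝒜 := stab_min_mem hSA hmA hAne hr
  have hsmem : Icc 1 s ∈ ℬ := stab_min_mem hSB hmB hBne hs1
  have hsplitA : 𝒜.card = (fam0 n 𝒜).card + (fam1 n 𝒜).card := card_fam_split
  have hsplitB : ℬ.card = (fam0 n ℬ).card + (fam1 n ℬ).card := card_fam_split
  have hmemA0 : ∀ A ∈ fam0 n 𝒜, A ⊆ Icc 1 (n-1) ∧ A.card = r := by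
    intro A hA
    obtain ⟨hA𝒜, hnA⟩ := mem_fam0.1 hA
    refine ⟨fun y hy => ?_, (hmA A hA𝒜).2⟩
    have := mem_Icc.1 ((hmA A hA𝒜).1 hy)
    have : y ≠ n := fun h => hnA (h ▸ hy)
    rw [mem_Icc]
    omega
  have hmemB0 : ∀ B ∈ fam0 n ℬ, B ⊆ Icc 1 (n-1) ∧ B.card = s := by
    intro B hB
    obtain ⟨hBℬ, hnB⟩ := mem_fam0.1 hB
    refine ⟨fun y hy => ?_, (hmB B hBℬ).2⟩
    have := mem_Icc.1 ((hmB B hBℬ).1 hy)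
    have : y ≠ n := fun h => hnB (h ▸ hy)
    rw [mem_Icc]
    omega
  have hmemA1 : ∀ A ∈ fam1 n 𝒜, A ⊆ Icc 1 (n-1) ∧ A.card = r - 1 := by
    intro A hA
    obtain ⟨hnA, hins⟩ := mem_fam1.1 hA
    obtain ⟨hsub, hcard⟩ := hmA _ hins
    constructor
    · intro y hy
      have h1 := mem_Icc.1 (hsub (mem_insert_of_mem hy))
      have : y ≠ n := fun h => hnA (h ▸ hy)
      rw [mem_Icc]
      omega
    · rw [card_insert_of_notMem hnA] at hcard
      omega
  have hmemB1 : ∀ B ∈ fam1 n ℬ, B ⊆ Icc 1 (n-1) ∧ B.card = s - 1 := by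
    intro B hB
    obtain ⟨hnB, hins⟩ := mem_fam1.1 hB
    obtain ⟨hsub, hcard⟩ := hmB _ hins
    constructor
    · intro y hy
      have h1 := mem_Icc.1 (hsub (mem_insert_of_mem hy))
      have : y ≠ n := fun h => hnB (h ▸ hy)
      rw [mem_Icc]
      omega
    · rw [card_insert_of_notMem hnB] at hcard
      omega
  have hA0ne : (fam0 n 𝒜).Nonempty :=
    ⟨Icc 1 r, mem_fam0.2 ⟨hrmem, fun h => by have := mem_Icc.1 h; omega⟩⟩
  have hB0ne : (fam0 n ℬ).Nonempty :=
    ⟨Icc 1 s, mem_fam0.2 ⟨hsmem, fun h => by have := mem_Icc.1 h; omega⟩⟩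
  have hcross0 : ∀ A ∈ fam0 n 𝒜, ∀ B ∈ fam0 n ℬ, (A ∩ B).Nonempty :=
    fun A hA B hB => hcross A (mem_fam0.1 hA).1 B (mem_fam0.1 hB).1
  have IH0 := ihn (n-1) (by omega) r s (fam0 n 𝒜) (fam0 n ℬ) hr hrs (by omega)
    hmemA0 hmemB0 hA0ne hB0ne hcross0
  rw [show n - 1 - r = n - r - 1 from by omega] at IH0
  -- counting for B1
  have hB1meet : ∀ B' ∈ fam1 n ℬ, (B' ∩ Icc 1 r).Nonempty := by
    intro B' hB'
    obtain ⟨hnB', hins⟩ := mem_fam1.1 hB'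
    obtain ⟨y, hy⟩ := hcross _ hrmem _ hins
    rw [mem_inter] at hy
    have hyr := mem_Icc.1 hy.1
    rcases mem_insert.1 hy.2 with rfl | hyB
    · omega
    · exact ⟨y, mem_inter.2 ⟨hyB, hy.1⟩⟩
  have hB1le : (fam1 n ℬ).card + (n-1-r).choose (s-1) ≤ (n-1).choose (s-1) :=
    card_le_meets (by omega) hmemB1 hB1meet
  rw [show n - 1 - r = n - r - 1 from by omega] at hB1le
  -- Pascal identities
  have hp1 : n.choose s = (n-1).choose (s-1) + (n-1).choose s := pascal (by omega) hs1
  have hp2 : (n-r).choose s = (n-r-1).choose (s-1) + (n-r-1).choose s := by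
    have := pascal (d := n - r) (s := s) (by omega) hs1
    rwa [show n - r - 1 = n - r - 1 from rfl] at this
  have hchm1 : (n-r-1).choose s ≤ (n-1).choose s := Nat.choose_le_choose s (by omega)
  have hchm2 : (n-r-1).choose (s-1) ≤ (n-1).choose (s-1) := Nat.choose_le_choose (s-1) (by omega)
  by_cases hA1e : fam1 n 𝒜 = ∅
  · -- Case 1 : no member of 𝒜 contains n
    have hA1c : (fam1 n 𝒜).card = 0 := by rw [hA1e]; exact card_empty
    omega
  · have hA1ne : (fam1 n 𝒜).Nonempty := nonempty_iff_ne_empty.2 hA1e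
    have hr2 : 2 ≤ r := by
      by_contra hcon
      have hr1 : r = 1 := by omega
      obtain ⟨A', hA'⟩ := hA1ne
      have hc := (hmemA1 A' hA').2
      have hA'e : A' = ∅ := card_eq_zero.1 (by omega)
      obtain ⟨hnA', hins⟩ := mem_fam1.1 hA'
      rw [hA'e] at hins
      obtain ⟨y, hy⟩ := hcross _ hins _ hsmem
      rw [mem_inter] at hy
      have hyn : y = n := by simpa using hy.1
      have := (mem_Icc.1 hy.2).2
      omega
    by_cases hB1e : fam1 n ℬ = ∅
    · -- Case 2a : some A contains n, no B contains n
      have hBavoid : ∀ B ∈ ℬ, n ∉ B := by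
        intro B hB hnB
        have : B.erase n ∈ fam1 n ℬ :=
          mem_fam1.2 ⟨notMem_erase _ _, by rwa [insert_erase hnB]⟩
        rw [hB1e] at this
        exact notMem_empty _ this
      have hmemB' : ∀ B ∈ ℬ, B ⊆ Icc 1 (n-1) ∧ B.card = s := by
        intro B hB
        refine ⟨fun y hy => ?_, (hmB B hB).2⟩
        have := mem_Icc.1 ((hmB B hB).1 hy)
        have : y ≠ n := fun h => hBavoid B hB (h ▸ hy)
        rw [mem_Icc]
        omega
      have hB1c : (fam1 n ℬ).card = 0 := by rw [hB1e]; exact card_empty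
      rcases eq_or_lt_of_le hrs with rfl | hrs'
      · -- r = s : mirror argument
        have hcross_sw : ∀ B ∈ fam0 n ℬ, ∀ A ∈ fam0 n 𝒜, (B ∩ A).Nonempty := by
          intro B hB A hA
          rw [inter_comm]
          exact hcross0 A hA B hB
        have IHsw := ihn (n-1) (by omega) r r (fam0 n ℬ) (fam0 n 𝒜) hr le_rfl (by omega)
          hmemB0 hmemA0 hB0ne hA0ne hcross_sw
        rw [show n - 1 - r = n - r - 1 from by omega] at IHsw
        have hA1meet : ∀ A' ∈ fam1 n 𝒜, (A' ∩ Icc 1 r).Nonempty := by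
          intro A' hA'
          obtain ⟨hnA', hins⟩ := mem_fam1.1 hA'
          obtain ⟨y, hy⟩ := hcross _ hins _ hsmem
          rw [mem_inter] at hy
          have hyr := mem_Icc.1 hy.2
          rcases mem_insert.1 hy.1 with rfl | hyA
          · omega
          · exact ⟨y, mem_inter.2 ⟨hyA, hy.2⟩⟩
        have hA1le : (fam1 n 𝒜).card + (n-1-r).choose (r-1) ≤ (n-1).choose (r-1) :=
          card_le_meets (by omega) hmemA1 hA1meet
        rw [show n - 1 - r = n - r - 1 from by omega] at hA1le
        omega
      · -- r < s : pair (A1, ℬ)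
        have hcross1 : ∀ A' ∈ fam1 n 𝒜, ∀ B ∈ ℬ, (A' ∩ B).Nonempty := by
          intro A' hA' B hB
          obtain ⟨hnA', hins⟩ := mem_fam1.1 hA'
          obtain ⟨y, hy⟩ := hcross _ hins _ hB
          rw [mem_inter] at hy
          rcases mem_insert.1 hy.1 with rfl | hyA
          · exact absurd hy.2 (hBavoid B hB)
          · exact ⟨y, mem_inter.2 ⟨hyA, hy.2⟩⟩
        have IH1 := ihn (n-1) (by omega) (r-1) s (fam1 n 𝒜) ℬ (by omega) (by omega) (by omega)
          hmemA1 hmemB' hA1ne hBne hcross1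
        rw [show n - 1 - (r-1) = n - r from by omega] at IH1
        have hA0le : (fam0 n 𝒜).card ≤ (n-1).choose r := by
          have hsub : fam0 n 𝒜 ⊆ (Icc 1 (n-1)).powersetCard r := by
            intro A hA
            exact mem_powersetCard.2 ⟨(hmemA0 A hA).1, (hmemA0 A hA).2⟩
          have := card_le_card hsub
          rwa [card_powersetCard, Nat.card_Icc, show n - 1 + 1 - 1 = n - 1 from by omega] at this
        have hmono : (n-1).choose r ≤ (n-1).choose (s-1) :=
          choose_le_choose_of_le (by omega) (by omega)
        omega
    · -- Case 2b : both links nonempty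
      have hB1ne : (fam1 n ℬ).Nonempty := nonempty_iff_ne_empty.2 hB1e
      have hcross11 : ∀ A' ∈ fam1 n 𝒜, ∀ B' ∈ fam1 n ℬ, (A' ∩ B').Nonempty := by
        intro A' hA' B' hB'
        obtain ⟨hnA', hinsA⟩ := mem_fam1.1 hA'
        obtain ⟨hnB', hinsB⟩ := mem_fam1.1 hB'
        have hsubU : A' ∪ B' ⊆ Icc 1 (n-1) :=
          union_subset (hmemA1 _ hA').1 (hmemB1 _ hB').1
        have hex : (Icc 1 (n-1) \ (A' ∪ B')).Nonempty := by
          rw [← card_pos, card_sdiff_of_subset hsubU, Nat.card_Icc]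
          have hu := card_union_le A' B'
          have h1 := (hmemA1 _ hA').2
          have h2 := (hmemB1 _ hB').2
          have h3 := card_le_card hsubU
          rw [Nat.card_Icc] at h3
          omega
        obtain ⟨j, hj⟩ := hex
        rw [mem_sdiff, mem_Icc] at hj
        have hjn : j < n := by omega
        have hjA : j ∉ insert n A' := by
          intro h
          rcases mem_insert.1 h with rfl | h
          · omega
          · exact hj.2 (mem_union_left _ h)
        have hA'' : UV.compress {j} {n} (insert n A') ∈ 𝒜 :=
          stab_apply hSA hj.1.1 hjn le_rfl hinsA
        rw [compress_eq (by omega) hjA (mem_insert_self _ _), erase_insert hnA'] at hA''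
        obtain ⟨y, hy⟩ := hcross _ hA'' _ hinsB
        rw [mem_inter] at hy
        rcases mem_insert.1 hy.1 with rfl | hyA
        · rcases mem_insert.1 hy.2 with h | h
          · omega
          · exact (hj.2 (mem_union_right _ h)).elim
        · rcases mem_insert.1 hy.2 with rfl | hyB
          · exfalso
            have := mem_Icc.1 ((hmemA1 _ hA').1 hyA)
            omega
          · exact ⟨y, mem_inter.2 ⟨hyA, hyB⟩⟩
      have IH11 := ihn (n-1) (by omega) (r-1) (s-1) (fam1 n 𝒜) (fam1 n ℬ)
        (by omega) (by omega) (by omega) hmemA1 hmemB1 hA1ne hB1ne hcross11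
      rw [show n - 1 - (r-1) = n - r from by omega] at IH11
      have hpos : 1 ≤ (n-r-1).choose (s-2) := Nat.choose_pos (by omega)
      have hp3 : (n-r).choose (s-1) = (n-r-1).choose (s-2) + (n-r-1).choose (s-1) := by
        have := pascal (d := n - r) (s := s - 1) (by omega) (by omega)
        rwa [show s - 1 - 1 = s - 2 from by omega] at this
      omega

lemma measure_rec (n : ℕ) (ihn : ∀ m, m < n → FTmain m) :
    ∀ M (r s : ℕ) (𝒜 ℬ : Finset (Finset ℕ)), 1 ≤ r → r ≤ s → r + s ≤ n →
    (∀ A ∈ 𝒜, A ⊆ Icc 1 n ∧ A.card = r) → (∀ B ∈ ℬ, B ⊆ Icc 1 n ∧ B.card = s) →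
    𝒜.Nonempty → ℬ.Nonempty → (∀ A ∈ 𝒜, ∀ B ∈ ℬ, (A ∩ B).Nonempty) →
    fmeasure 𝒜 + fmeasure ℬ ≤ M →
    𝒜.card + ℬ.card + (n - r).choose s ≤ 1 + n.choose s := by
  intro M
  induction M using Nat.strong_induction_on with
  | _ M ihM =>
  intro r s 𝒜 ℬ hr hrs hn hmA hmB hAne hBne hcross hM
  by_cases hstab : Stab n 𝒜 ∧ Stab n ℬ
  · exact stable_case n ihn hr hrs hn hmA hmB hAne hBne hcross hstab.1 hstab.2
  · have hbad : ∃ i j, 1 ≤ i ∧ i < j ∧ j ≤ n ∧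
        ¬(UV.IsCompressed {i} {j} 𝒜 ∧ UV.IsCompressed {i} {j} ℬ) := by
      by_contra h
      push_neg at h
      exact hstab ⟨fun i j h1 h2 h3 => (h i j h1 h2 h3).1, fun i j h1 h2 h3 => (h i j h1 h2 h3).2⟩
    obtain ⟨i, j, h1, h2, h3, hbad⟩ := hbad
    have ha := fmeasure_compression h2 𝒜
    have hb := fmeasure_compression h2 ℬ
    have hlt : fmeasure (𝓒 {i} {j} 𝒜) + fmeasure (𝓒 {i} {j} ℬ) < fmeasure 𝒜 + fmeasure ℬ := by
      rcases not_and_or.1 hbad with h | h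
      · have := ha.2 (fun heq => h heq)
        omega
      · have := hb.2 (fun heq => h heq)
        omega
    have hAne' : (𝓒 {i} {j} 𝒜).Nonempty := by
      rw [← card_pos, UV.card_compression]
      exact card_pos.2 hAne
    have hBne' : (𝓒 {i} {j} ℬ).Nonempty := by
      rw [← card_pos, UV.card_compression]
      exact card_pos.2 hBne
    have hres := ihM (fmeasure (𝓒 {i} {j} 𝒜) + fmeasure (𝓒 {i} {j} ℬ)) (by omega)
      r s (𝓒 {i} {j} 𝒜) (𝓒 {i} {j} ℬ) hr hrs hn
      (compression_mems h1 h2 h3 hmA) (compression_mems h1 h2 h3 hmB)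
      hAne' hBne' (cross_compression h2.ne hcross) le_rfl
    rwa [UV.card_compression, UV.card_compression] at hres

theorem FTmain_all : ∀ n, FTmain n := by
  intro n
  induction n using Nat.strong_induction_on with
  | _ n ihn =>
  intro r s 𝒜 ℬ hr hrs hn hmA hmB hAne hBne hcross
  exact measure_rec n ihn (fmeasure 𝒜 + fmeasure ℬ) r s 𝒜 ℬ hr hrs hn hmA hmB hAne hBne hcross
    le_rfl

end Main

end FT2

open Finset

theorem frankl_tokushige (n r s : ℕ) (hr : 1 ≤ r) (hrs : r ≤ s) (hn : r + s ≤ n)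
    (𝒜 ℬ : Finset (Finset ℕ))
    (h𝒜 : ∀ A ∈ 𝒜, A ⊆ Finset.Icc 1 n ∧ A.card = r)
    (hℬ : ∀ B ∈ ℬ, B ⊆ Finset.Icc 1 n ∧ B.card = s)
    (h𝒜ne : 𝒜.Nonempty) (hℬne : ℬ.Nonempty)
    (hcross : ∀ A ∈ 𝒜, ∀ B ∈ ℬ, (A ∩ B).Nonempty) :
    𝒜.card + ℬ.card ≤ 1 + n.choose s - (n - r).choose s := by
  have h := FT2.FTmain_all n r s 𝒜 ℬ hr hrs hn h𝒜 hℬ h𝒜ne hℬne hcross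
  have hmono : (n - r).choose s ≤ n.choose s := Nat.choose_le_choose s (by omega)
  omega
end

section
/- (Hilton–Milner cross-intersecting theorem) Let 1 ≤ r ≤ n/2. If A and B are non-empty cross-intersecting subfamilies of ([n] choose r), then |A| + |B| ≤ C(n,r) − C(n−r,r) + 1. -/
open Finset

namespace HMCross

open Finset.UV
open scoped FinsetFamily

variable {i j n r m t : ℕ} {𝒜 ℬ : Finset (Finset ℕ)} {A B : Finset ℕ}

def Cross (𝒜 ℬ : Finset (Finset ℕ)) : Prop := ∀ A ∈ 𝒜, ∀ B ∈ ℬ, (A ∩ B).Nonempty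

def Shifted (𝒜 : Finset (Finset ℕ)) : Prop :=
  ∀ A ∈ 𝒜, ∀ i j : ℕ, 1 ≤ i → i < j → j ∈ A → i ∉ A → insert i (A.erase j) ∈ 𝒜

def Good (n r : ℕ) (𝒜 : Finset (Finset ℕ)) : Prop :=
  ∀ A ∈ 𝒜, A ⊆ Finset.Icc 1 n ∧ A.card = r

def w (A : Finset ℕ) : ℕ := ∑ x ∈ A, x

def μ (𝒜 : Finset (Finset ℕ)) : ℕ := ∑ A ∈ 𝒜, w A

lemma compress_of_mem (hij : i ≠ j) (hiA : i ∉ A) (hjA : j ∈ A) :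
    UV.compress {i} {j} A = insert i (A.erase j) := by
  rw [UV.compress, if_pos ⟨Finset.disjoint_singleton_left.2 hiA, Finset.singleton_subset_iff.2 hjA⟩]
  ext x
  simp only [sup_eq_union, mem_sdiff, mem_union, mem_singleton, mem_insert, mem_erase]
  constructor
  · rintro ⟨h1 | h1, h2⟩
    · exact Or.inr ⟨h2, h1⟩
    · exact Or.inl h1
  · rintro (rfl | ⟨h1, h2⟩)
    · exact ⟨Or.inr rfl, hij⟩
    · exact ⟨Or.inl h2, h1⟩

lemma compress_of_not (h : i ∈ A ∨ j ∉ A) : UV.compress {i} {j} A = A := by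
  rw [UV.compress, if_neg]
  rintro ⟨h1, h2⟩
  rcases h with h | h
  · exact Finset.disjoint_singleton_left.1 h1 h
  · exact h (Finset.singleton_subset_iff.1 h2)

lemma compress_ne_cases (h : UV.compress {i} {j} A ≠ A) : i ∉ A ∧ j ∈ A := by
  by_contra hc; apply h; apply compress_of_not; tauto

lemma Cross.symm (h : Cross 𝒜 ℬ) : Cross ℬ 𝒜 := fun B hB A hA => by
  rw [inter_comm]; exact h A hA B hB

/-- key case: A' kept, B moved -/
lemma cross_key (hij : i ≠ j) (h : Cross 𝒜 ℬ) (hA' : A ∈ 𝒜) (hcA' : UV.compress {i} {j} A ∈ 𝒜)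
    (hB : B ∈ ℬ) (hiB : i ∉ B) (hjB : j ∈ B) :
    (A ∩ insert i (B.erase j)).Nonempty := by
  obtain ⟨x, hx⟩ := h A hA' B hB
  rw [mem_inter] at hx
  by_cases hxj : x = j
  · subst hxj
    by_cases hiA : i ∈ A
    · exact ⟨i, mem_inter.2 ⟨hiA, mem_insert_self _ _⟩⟩
    · rw [compress_of_mem hij hiA hx.1] at hcA'
      obtain ⟨y, hy⟩ := h _ hcA' B hB
      rw [mem_inter, mem_insert] at hy
      rcases hy.1 with rfl | hy1
      · exact absurd hy.2 hiB
      · exact ⟨y, mem_inter.2 ⟨(mem_erase.1 hy1).2,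
          mem_insert_of_mem (mem_erase.2 ⟨(mem_erase.1 hy1).1, hy.2⟩)⟩⟩
  · exact ⟨x, mem_inter.2 ⟨hx.1, mem_insert_of_mem (mem_erase.2 ⟨hxj, hx.2⟩)⟩⟩

lemma cross_compression (hij : i ≠ j) (h : Cross 𝒜 ℬ) :
    Cross (𝓒 {i} {j} 𝒜) (𝓒 {i} {j} ℬ) := by
  intro A' hA' B' hB'
  rw [UV.mem_compression] at hA' hB'
  rcases hA' with ⟨hA1, hA2⟩ | ⟨hA1, A, hA, hA2⟩
  · rcases hB' with ⟨hB1, _⟩ | ⟨hB1, B, hB, hB2⟩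
    · exact h _ hA1 _ hB1
    · have hBm : UV.compress {i} {j} B ≠ B := by rw [hB2]; intro e; exact hB1 (e ▸ hB)
      obtain ⟨hiB, hjB⟩ := compress_ne_cases hBm
      rw [← hB2, compress_of_mem hij hiB hjB]
      exact cross_key hij h hA1 hA2 hB hiB hjB
  · have hAm : UV.compress {i} {j} A ≠ A := by rw [hA2]; intro e; exact hA1 (e ▸ hA)
    obtain ⟨hiA, hjA⟩ := compress_ne_cases hAm
    rcases hB' with ⟨hB1, hB2⟩ | ⟨hB1, B, hB, hB2⟩
    · rw [← hA2, compress_of_mem hij hiA hjA, inter_comm]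
      exact cross_key hij h.symm hB1 hB2 hA hiA hjA
    · have hBm : UV.compress {i} {j} B ≠ B := by rw [hB2]; intro e; exact hB1 (e ▸ hB)
      obtain ⟨hiB, hjB⟩ := compress_ne_cases hBm
      rw [← hA2, ← hB2, compress_of_mem hij hiA hjA, compress_of_mem hij hiB hjB]
      exact ⟨i, mem_inter.2 ⟨mem_insert_self _ _, mem_insert_self _ _⟩⟩


lemma w_compress_lt (hij : i < j) (h : UV.compress {i} {j} A ≠ A) :
    w (UV.compress {i} {j} A) < w A := by
  obtain ⟨hiA, hjA⟩ := compress_ne_cases h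
  rw [compress_of_mem hij.ne hiA hjA]
  have h1 : w (insert i (A.erase j)) = i + w (A.erase j) :=
    Finset.sum_insert (fun hc => hiA (mem_of_mem_erase hc))
  have h2 : w (A.erase j) + j = w A := Finset.sum_erase_add _ _ hjA
  omega

lemma mu_compression_eq :
    μ (𝓒 {i} {j} 𝒜) = ∑ A ∈ {A ∈ 𝒜 | UV.compress {i} {j} A ∈ 𝒜}, w A
      + ∑ A ∈ {A ∈ 𝒜 | UV.compress {i} {j} A ∉ 𝒜}, w (UV.compress {i} {j} A) := by
  rw [μ, UV.compression, sum_union UV.compress_disjoint, filter_image,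
    sum_image fun x hx y hy e => UV.compress_injOn (by simpa using hx) (by simpa using hy) e]

lemma mu_compression_le (hij : i < j) : μ (𝓒 {i} {j} 𝒜) ≤ μ 𝒜 := by
  rw [mu_compression_eq, μ, ← sum_filter_add_sum_filter_not 𝒜 (fun A => UV.compress {i} {j} A ∈ 𝒜)]
  refine Nat.add_le_add le_rfl (Finset.sum_le_sum fun A hA => ?_)
  rw [mem_filter] at hA
  exact le_of_lt (w_compress_lt hij (by intro e; rw [e] at hA; exact hA.2 hA.1))

lemma mu_compression_lt (hij : i < j) (h : 𝓒 {i} {j} 𝒜 ≠ 𝒜) :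
    μ (𝓒 {i} {j} 𝒜) < μ 𝒜 := by
  have hne : {A ∈ 𝒜 | UV.compress {i} {j} A ∉ 𝒜}.Nonempty := by
    rw [filter_nonempty_iff]
    by_contra hc
    push_neg at hc
    apply h
    rw [UV.compression]
    have h1 : {a ∈ 𝒜 | UV.compress {i} {j} a ∈ 𝒜} = 𝒜 := filter_true_of_mem hc
    have h2 : {a ∈ 𝒜.image (UV.compress {i} {j}) | a ∉ 𝒜} = ∅ := by
      refine filter_false_of_mem fun a ha => ?_
      obtain ⟨b, hb, rfl⟩ := mem_image.1 ha
      simpa using hc b hb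
    rw [h1, h2, union_empty]
  rw [mu_compression_eq, μ, ← sum_filter_add_sum_filter_not 𝒜 (fun A => UV.compress {i} {j} A ∈ 𝒜)]
  refine Nat.add_lt_add_left (Finset.sum_lt_sum_of_nonempty hne fun A hA => ?_) _
  rw [mem_filter] at hA
  exact w_compress_lt hij (by intro e; rw [e] at hA; exact hA.2 hA.1)


lemma good_compression (hi : 1 ≤ i) (hij : i < j) (hg : Good n r 𝒜) :
    Good n r (𝓒 {i} {j} 𝒜) := by
  intro A' hA'
  rw [UV.mem_compression] at hA'
  rcases hA' with ⟨h1, _⟩ | ⟨_, A, hA, rfl⟩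
  · exact hg _ h1
  · by_cases hmv : UV.compress {i} {j} A = A
    · rw [hmv]; exact hg _ hA
    · obtain ⟨hiA, hjA⟩ := compress_ne_cases hmv
      obtain ⟨hsub, hcard⟩ := hg _ hA
      rw [compress_of_mem hij.ne hiA hjA]
      constructor
      · intro x hx
        rcases mem_insert.1 hx with rfl | hx'
        · have hj := hsub hjA
          rw [mem_Icc] at hj ⊢
          omega
        · exact hsub (mem_of_mem_erase hx')
      · have hc1 : i ∉ A.erase j := fun hc => hiA (mem_of_mem_erase hc)
        have hpos : 0 < A.card := card_pos.2 ⟨j, hjA⟩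
        rw [card_insert_of_notMem hc1, card_erase_of_mem hjA]
        omega

lemma not_shifted_witness (𝒞 : Finset (Finset ℕ)) (h : ¬ Shifted 𝒞) :
    ∃ i j, 1 ≤ i ∧ i < j ∧ 𝓒 {i} {j} 𝒞 ≠ 𝒞 := by
  rw [Shifted] at h; push_neg at h
  obtain ⟨A, hA, i, j, hi, hij, hjA, hiA, hnotin⟩ := h
  refine ⟨i, j, hi, hij, fun e => hnotin ?_⟩
  have h2 := UV.compress_mem_compression (u := {i}) (v := {j}) hA
  rw [compress_of_mem hij.ne hiA hjA, e] at h2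
  exact h2

lemma exists_shifted : ∀ (N : ℕ) (𝒜 ℬ : Finset (Finset ℕ)), μ 𝒜 + μ ℬ ≤ N →
    Good n r 𝒜 → Good n r ℬ → Cross 𝒜 ℬ →
    ∃ 𝒜' ℬ', 𝒜'.card = 𝒜.card ∧ ℬ'.card = ℬ.card ∧ Good n r 𝒜' ∧ Good n r ℬ' ∧
      Cross 𝒜' ℬ' ∧ Shifted 𝒜' ∧ Shifted ℬ' := by
  intro N
  induction N with
  | zero =>
    intro 𝒜 ℬ hμ hgA hgB hcr
    by_cases hsA : Shifted 𝒜
    · by_cases hsB : Shifted ℬ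
      · exact ⟨𝒜, ℬ, rfl, rfl, hgA, hgB, hcr, hsA, hsB⟩
      · obtain ⟨i, j, _, hij, hne⟩ := not_shifted_witness ℬ hsB
        have := mu_compression_lt hij hne
        omega
    · obtain ⟨i, j, _, hij, hne⟩ := not_shifted_witness 𝒜 hsA
      have := mu_compression_lt hij hne
      omega
  | succ N ih =>
    intro 𝒜 ℬ hμ hgA hgB hcr
    have go : ∀ i₀ j₀ : ℕ, 1 ≤ i₀ → i₀ < j₀ →
        μ (𝓒 {i₀} {j₀} 𝒜) + μ (𝓒 {i₀} {j₀} ℬ) ≤ N →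
        ∃ 𝒜' ℬ', 𝒜'.card = 𝒜.card ∧ ℬ'.card = ℬ.card ∧ Good n r 𝒜' ∧ Good n r ℬ' ∧
          Cross 𝒜' ℬ' ∧ Shifted 𝒜' ∧ Shifted ℬ' := by
      intro i₀ j₀ hi hij hμ'
      obtain ⟨𝒜', ℬ', h1, h2, h3, h4, h5, h6, h7⟩ := ih _ _ hμ'
        (good_compression hi hij hgA) (good_compression hi hij hgB)
        (cross_compression hij.ne hcr)
      exact ⟨𝒜', ℬ', h1.trans (UV.card_compression _ _ _),
        h2.trans (UV.card_compression _ _ _), h3, h4, h5, h6, h7⟩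
    by_cases hsA : Shifted 𝒜
    · by_cases hsB : Shifted ℬ
      · exact ⟨𝒜, ℬ, rfl, rfl, hgA, hgB, hcr, hsA, hsB⟩
      · obtain ⟨i, j, hi, hij, hne⟩ := not_shifted_witness ℬ hsB
        have hlt := mu_compression_lt hij hne
        have hle := mu_compression_le (𝒜 := 𝒜) hij
        exact go i j hi hij (by omega)
    · obtain ⟨i, j, hi, hij, hne⟩ := not_shifted_witness 𝒜 hsA
      have hlt := mu_compression_lt hij hne
      have hle := mu_compression_le (𝒜 := ℬ) hij
      exact go i j hi hij (by omega)


/-- From a member containing n, shiftedness produces a member avoiding n. -/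
lemma exists_member_without (hsh : Shifted ℬ) (hg : Good n r ℬ) (hrn : r < n)
    (hBne : ℬ.Nonempty) : ∃ B' ∈ ℬ, n ∉ B' := by
  obtain ⟨B, hB⟩ := hBne
  by_cases hnB : n ∈ B
  · obtain ⟨hsub, hcard⟩ := hg _ hB
    have hlt : B.card < (Finset.Icc 1 n).card := by
      rw [hcard, Nat.card_Icc]; omega
    have hns : ¬ (Finset.Icc 1 n ⊆ B) := fun hc => absurd (Finset.card_le_card hc) (by omega)
    obtain ⟨x, hx1, hx2⟩ := Finset.not_subset.1 hns
    have hx1' := Finset.mem_Icc.1 hx1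
    have hxn : x ≠ n := fun e => hx2 (e ▸ hnB)
    have hxlt : x < n := lt_of_le_of_ne hx1'.2 hxn
    refine ⟨insert x (B.erase n), hsh B hB x n hx1'.1 hxlt hnB hx2, ?_⟩
    intro hc
    rcases mem_insert.1 hc with e | h
    · exact hxn e.symm
    · exact (mem_erase.1 h).1 rfl
  · exact ⟨B, hB, hnB⟩

/-- links are cross-intersecting -/
lemma links_cross (hsh : Shifted 𝒜) (hcr : Cross 𝒜 ℬ) (hgA : Good n r 𝒜) (hgB : Good n r ℬ)
    (hrn : 2 * r ≤ n) (hA : A ∈ 𝒜) (hnA : n ∈ A) (hB : B ∈ ℬ) (hnB : n ∈ B) :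
    ((A.erase n) ∩ (B.erase n)).Nonempty := by
  obtain ⟨hsubA, hcardA⟩ := hgA _ hA
  obtain ⟨hsubB, hcardB⟩ := hgB _ hB
  have hu : (A ∪ B).card < (Finset.Icc 1 n).card := by
    have h1 := Finset.card_union_add_card_inter A B
    have h2 : 0 < (A ∩ B).card := card_pos.2 ⟨n, mem_inter.2 ⟨hnA, hnB⟩⟩
    have h3 : 1 ≤ r := by
      rcases Nat.eq_zero_or_pos r with h | h
      · rw [h] at hcardA; rw [card_eq_zero] at hcardA; subst hcardA; simp at hnA
      · exact h
    rw [Nat.card_Icc]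
    omega
  have hns : ¬ (Finset.Icc 1 n ⊆ A ∪ B) := fun hc => absurd (Finset.card_le_card hc) (by omega)
  obtain ⟨x, hx1, hx2⟩ := Finset.not_subset.1 hns
  rw [mem_union] at hx2
  push_neg at hx2
  have hx1' := Finset.mem_Icc.1 hx1
  have hxn : x < n := lt_of_le_of_ne hx1'.2 (fun e => hx2.1 (e ▸ hnA))
  have hA' : insert x (A.erase n) ∈ 𝒜 := hsh A hA x n hx1'.1 hxn hnA hx2.1
  obtain ⟨y, hy⟩ := hcr _ hA' B hB
  rw [mem_inter, mem_insert] at hy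
  rcases hy.1 with rfl | hy1
  · exact absurd hy.2 hx2.2
  · refine ⟨y, mem_inter.2 ⟨hy1, mem_erase.2 ⟨(mem_erase.1 hy1).1, hy.2⟩⟩⟩

/-- Counting: family of t-subsets of Icc 1 m all meeting a fixed set S of size s. -/
lemma card_le_of_meets (𝒞 : Finset (Finset ℕ)) (S : Finset ℕ) (hS : S ⊆ Finset.Icc 1 m)
    (hg : ∀ X ∈ 𝒞, X ⊆ Finset.Icc 1 m ∧ X.card = t)
    (hmeet : ∀ X ∈ 𝒞, (X ∩ S).Nonempty) :
    𝒞.card + (m - S.card).choose t ≤ m.choose t := by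
  have h1 : 𝒞 ⊆ Finset.powersetCard t (Finset.Icc 1 m) := fun X hX =>
    Finset.mem_powersetCard.2 ⟨(hg X hX).1, (hg X hX).2⟩
  set D := Finset.powersetCard t (Finset.Icc 1 m \ S) with hD
  have h2 : D ⊆ Finset.powersetCard t (Finset.Icc 1 m) :=
    Finset.powersetCard_mono Finset.sdiff_subset
  have h3 : Disjoint 𝒞 D := by
    rw [Finset.disjoint_left]
    intro X hX hXD
    obtain ⟨hsub, _⟩ := Finset.mem_powersetCard.1 hXD
    obtain ⟨x, hx⟩ := hmeet X hX
    rw [mem_inter] at hx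
    exact (Finset.mem_sdiff.1 (hsub hx.1)).2 hx.2
  have h4 : 𝒞.card + D.card ≤ (Finset.powersetCard t (Finset.Icc 1 m)).card := by
    rw [← Finset.card_union_of_disjoint h3]
    exact Finset.card_le_card (Finset.union_subset h1 h2)
  rw [Finset.card_powersetCard, Finset.card_powersetCard, Finset.card_sdiff_of_subset hS,
    Nat.card_Icc] at h4
  simpa using h4


lemma pascal (hn : 1 ≤ n) (hr : 1 ≤ r) :
    n.choose r = (n-1).choose (r-1) + (n-1).choose r := by
  obtain ⟨n', rfl⟩ : ∃ n', n = n'+1 := ⟨n-1, by omega⟩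
  obtain ⟨r', rfl⟩ : ∃ r', r = r'+1 := ⟨r-1, by omega⟩
  simp [Nat.choose_succ_succ]

theorem core : ∀ n : ℕ, ∀ r (𝒜 ℬ : Finset (Finset ℕ)), 1 ≤ r → 2 * r ≤ n →
    Good n r 𝒜 → Good n r ℬ → 𝒜.Nonempty → ℬ.Nonempty → Cross 𝒜 ℬ →
    𝒜.card + ℬ.card + (n - r).choose r ≤ n.choose r + 1 := by
  intro n
  induction n using Nat.strong_induction_on with
  | _ n IH =>
  intro r 𝒜 ℬ hr hrn hgA hgB hAne hBne hcr
  -- r = 1 case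
  rcases eq_or_lt_of_le hr with hr1 | hr2
  · -- r = 1
    have hr1' : r = 1 := hr1.symm
    subst hr1'
    obtain ⟨B₀, hB₀⟩ := hBne
    obtain ⟨A₀, hA₀⟩ := hAne
    have singA : ∀ A ∈ 𝒜, A = B₀ := by
      intro A hA
      obtain ⟨x, hx⟩ := hcr A hA B₀ hB₀
      rw [mem_inter] at hx
      obtain ⟨a, ha⟩ := Finset.card_eq_one.1 (hgA A hA).2
      obtain ⟨b, hb⟩ := Finset.card_eq_one.1 (hgB B₀ hB₀).2
      rw [ha] at hx; rw [hb] at hx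
      have e1 : x = a := mem_singleton.1 hx.1
      have e2 : x = b := mem_singleton.1 hx.2
      have hab : a = b := by omega
      rw [ha, hb, hab]
    have singB : ∀ B ∈ ℬ, B = A₀ := by
      intro B hB
      obtain ⟨x, hx⟩ := hcr A₀ hA₀ B hB
      rw [mem_inter] at hx
      obtain ⟨a, ha⟩ := Finset.card_eq_one.1 (hgB B hB).2
      obtain ⟨b, hb⟩ := Finset.card_eq_one.1 (hgA A₀ hA₀).2
      rw [hb] at hx; rw [ha] at hx
      have e1 : x = a := mem_singleton.1 hx.2
      have e2 : x = b := mem_singleton.1 hx.1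
      have hab : a = b := by omega
      rw [ha, hb, hab]
    have hcardA : 𝒜.card ≤ 1 := by
      have : 𝒜 ⊆ {B₀} := fun A hA => mem_singleton.2 (singA A hA)
      simpa using Finset.card_le_card this
    have hcardB : ℬ.card ≤ 1 := by
      have : ℬ ⊆ {A₀} := fun B hB => mem_singleton.2 (singB B hB)
      simpa using Finset.card_le_card this
    rw [Nat.choose_one_right, Nat.choose_one_right]
    omega
  -- now 2 ≤ r
  rcases eq_or_lt_of_le hrn with hn | hn
  · -- base case n = 2r : complement injection
    set K := Finset.Icc 1 n with hK
    have hKcard : K.card = n := by rw [hK, Nat.card_Icc]; omega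
    set ℬc := ℬ.image (fun B => K \ B) with hBc
    have hinj : ∀ X ∈ ℬ, ∀ Y ∈ ℬ, K \ X = K \ Y → X = Y := by
      intro X hX Y hY e
      have h1 : K \ (K \ X) = X := Finset.sdiff_sdiff_eq_self (hgB X hX).1
      have h2 : K \ (K \ Y) = Y := Finset.sdiff_sdiff_eq_self (hgB Y hY).1
      rw [← h1, ← h2, e]
    have hcardBc : ℬc.card = ℬ.card := Finset.card_image_of_injOn hinj
    have hdisj : Disjoint 𝒜 ℬc := by
      rw [Finset.disjoint_left]
      intro A hA hABc
      obtain ⟨B, hB, hAB⟩ := Finset.mem_image.1 hABc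
      obtain ⟨x, hx⟩ := hcr A hA B hB
      rw [mem_inter] at hx
      rw [← hAB] at hx
      exact (Finset.mem_sdiff.1 hx.1).2 hx.2
    have hsubU : 𝒜 ∪ ℬc ⊆ Finset.powersetCard r K := by
      intro X hX
      rcases Finset.mem_union.1 hX with hX | hX
      · exact Finset.mem_powersetCard.2 ⟨(hgA X hX).1, (hgA X hX).2⟩
      · obtain ⟨B, hB, rfl⟩ := Finset.mem_image.1 hX
        refine Finset.mem_powersetCard.2 ⟨Finset.sdiff_subset, ?_⟩
        rw [Finset.card_sdiff_of_subset (hgB B hB).1, hKcard, (hgB B hB).2]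
        omega
    have hub : 𝒜.card + ℬ.card ≤ n.choose r := by
      have h1 := Finset.card_le_card hsubU
      rw [Finset.card_union_of_disjoint hdisj, Finset.card_powersetCard, hKcard, hcardBc] at h1
      exact h1
    have hnr : n - r = r := by omega
    rw [hnr, Nat.choose_self]
    omega
  · -- main case 2r < n
    obtain ⟨𝒜', ℬ', hcA, hcB, hgA', hgB', hcr', hsA', hsB'⟩ :=
      exists_shifted (μ 𝒜 + μ ℬ) 𝒜 ℬ le_rfl hgA hgB hcr
    rw [← hcA, ← hcB]
    have hAne' : 𝒜'.Nonempty := card_pos.1 (by rw [hcA]; exact card_pos.2 hAne)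
    have hBne' : ℬ'.Nonempty := card_pos.1 (by rw [hcB]; exact card_pos.2 hBne)
    clear hcA hcB hgA hgB hcr hAne hBne
    set 𝒜₁ := 𝒜'.filter (fun A => n ∈ A) with h𝒜₁
    set 𝒜₀ := 𝒜'.filter (fun A => ¬ n ∈ A) with h𝒜₀
    set ℬ₁ := ℬ'.filter (fun B => n ∈ B) with hℬ₁
    set ℬ₀ := ℬ'.filter (fun B => ¬ n ∈ B) with hℬ₀
    set 𝒜₁' := 𝒜₁.image (fun A => A.erase n) with h𝒜₁'
    set ℬ₁' := ℬ₁.image (fun B => B.erase n) with hℬ₁'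
    have hsplitA : 𝒜₁.card + 𝒜₀.card = 𝒜'.card :=
      Finset.card_filter_add_card_filter_not (p := fun A => n ∈ A)
    have hsplitB : ℬ₁.card + ℬ₀.card = ℬ'.card :=
      Finset.card_filter_add_card_filter_not (p := fun B => n ∈ B)
    have herase_inj : ∀ (𝒞 : Finset (Finset ℕ)),
        ((𝒞.filter (fun A => n ∈ A)).image (fun A => A.erase n)).card
          = (𝒞.filter (fun A => n ∈ A)).card := by
      intro 𝒞
      refine Finset.card_image_of_injOn ?_
      intro X hX Y hY e
      have hX' : n ∈ X := (mem_filter.1 (mem_coe.1 hX)).2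
      have hY' : n ∈ Y := (mem_filter.1 (mem_coe.1 hY)).2
      simp only at e
      rw [← Finset.insert_erase hX', ← Finset.insert_erase hY', e]
    have hA1card : 𝒜₁'.card = 𝒜₁.card := herase_inj 𝒜'
    have hB1card : ℬ₁'.card = ℬ₁.card := herase_inj ℬ'
    have hgood₀ : ∀ (𝒞 : Finset (Finset ℕ)), Good n r 𝒞 →
        Good (n-1) r (𝒞.filter (fun A => ¬ n ∈ A)) := by
      intro 𝒞 h𝒞 A hA
      rw [mem_filter] at hA
      obtain ⟨hsub, hcard⟩ := h𝒞 _ hA.1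
      refine ⟨fun x hx => ?_, hcard⟩
      have h1 := mem_Icc.1 (hsub hx)
      rw [mem_Icc]
      have hxn : x ≠ n := fun e => hA.2 (e ▸ hx)
      omega
    have hgood₁ : ∀ (𝒞 : Finset (Finset ℕ)), Good n r 𝒞 →
        Good (n-1) (r-1) ((𝒞.filter (fun A => n ∈ A)).image (fun A => A.erase n)) := by
      intro 𝒞 h𝒞 X hX
      obtain ⟨A, hA, rfl⟩ := mem_image.1 hX
      rw [mem_filter] at hA
      obtain ⟨hsub, hcard⟩ := h𝒞 _ hA.1
      constructor
      · intro x hx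
        have h1 := mem_Icc.1 (hsub (mem_of_mem_erase hx))
        have h2 := (mem_erase.1 hx).1
        rw [mem_Icc]; omega
      · rw [card_erase_of_mem hA.2, hcard]
    have hgA₀ : Good (n-1) r 𝒜₀ := hgood₀ _ hgA'
    have hgB₀ : Good (n-1) r ℬ₀ := hgood₀ _ hgB'
    have hgA₁ : Good (n-1) (r-1) 𝒜₁' := hgood₁ _ hgA'
    have hgB₁ : Good (n-1) (r-1) ℬ₁' := hgood₁ _ hgB'
    have hA₀ne : 𝒜₀.Nonempty := by
      obtain ⟨A', hA', hnA'⟩ := exists_member_without hsA' hgA' (by omega) hAne'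
      exact ⟨A', mem_filter.2 ⟨hA', hnA'⟩⟩
    have hB₀ne : ℬ₀.Nonempty := by
      obtain ⟨B', hB', hnB'⟩ := exists_member_without hsB' hgB' (by omega) hBne'
      exact ⟨B', mem_filter.2 ⟨hB', hnB'⟩⟩
    have p1 : (n-r).choose r = (n-r-1).choose (r-1) + (n-r-1).choose r :=
      pascal (by omega) hr
    have p2 : n.choose r = (n-1).choose (r-1) + (n-1).choose r := pascal (by omega) hr
    have e1 : n-1-r = n-r-1 := by omega
    have hcr₀ : Cross 𝒜₀ ℬ₀ := fun A hA B hB =>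
      hcr' _ (mem_filter.1 hA).1 _ (mem_filter.1 hB).1
    by_cases hA1 : 𝒜₁.Nonempty <;> by_cases hB1 : ℬ₁.Nonempty
    · -- both link families nonempty
      have hcr₁ : Cross 𝒜₁' ℬ₁' := by
        intro X hX Y hY
        obtain ⟨A, hA, rfl⟩ := mem_image.1 hX
        obtain ⟨B, hB, rfl⟩ := mem_image.1 hY
        rw [mem_filter] at hA hB
        exact links_cross hsA' hcr' hgA' hgB' (by omega) hA.1 hA.2 hB.1 hB.2
      have ih₀ := IH (n-1) (by omega) r 𝒜₀ ℬ₀ hr (by omega) hgA₀ hgB₀ hA₀ne hB₀ne hcr₀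
      have ih₁ := IH (n-1) (by omega) (r-1) 𝒜₁' ℬ₁' (by omega) (by omega) hgA₁ hgB₁
        (hA1.image _) (hB1.image _) hcr₁
      have e2 : n-1-(r-1) = n-r := by omega
      rw [e1] at ih₀
      rw [e2] at ih₁
      have p3 : (n-r).choose (r-1) = (n-r-1).choose (r-1-1) + (n-r-1).choose (r-1) :=
        pascal (by omega) (by omega)
      have e3 : r-1-1 = r-2 := by omega
      rw [e3] at p3
      have p4 : 0 < (n-r-1).choose (r-2) := Nat.choose_pos (by omega)
      omega
    · -- 𝒜₁ nonempty, ℬ₁ empty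
      have hByes : ∀ B ∈ ℬ', n ∉ B := fun B hB hnB => hB1 ⟨B, mem_filter.2 ⟨hB, hnB⟩⟩
      have hgB'' : Good (n-1) r ℬ' := by
        intro B hB
        obtain ⟨hsub, hcard⟩ := hgB' B hB
        refine ⟨fun x hx => ?_, hcard⟩
        have h1 := mem_Icc.1 (hsub hx)
        rw [mem_Icc]
        have hxn : x ≠ n := fun e => hByes B hB (e ▸ hx)
        omega
      have hcrA₀B : Cross 𝒜₀ ℬ' := fun A hA B hB => hcr' _ (mem_filter.1 hA).1 _ hB
      have ih₀ := IH (n-1) (by omega) r 𝒜₀ ℬ' hr (by omega) hgA₀ hgB'' hA₀ne hBne' hcrA₀B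
      obtain ⟨B₀, hB₀⟩ := hBne'
      have hmeets : ∀ X ∈ 𝒜₁', (X ∩ B₀).Nonempty := by
        intro X hX
        obtain ⟨A, hA, rfl⟩ := mem_image.1 hX
        rw [mem_filter] at hA
        obtain ⟨x, hx⟩ := hcr' A hA.1 B₀ hB₀
        rw [mem_inter] at hx
        have hxn : x ≠ n := fun e => hByes B₀ hB₀ (e ▸ hx.2)
        exact ⟨x, mem_inter.2 ⟨mem_erase.2 ⟨hxn, hx.1⟩, hx.2⟩⟩
      have hbound := card_le_of_meets 𝒜₁' B₀ (hgB'' B₀ hB₀).1 hgA₁ hmeets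
      rw [(hgB' B₀ hB₀).2] at hbound
      rw [e1] at ih₀ hbound
      omega
    · -- 𝒜₁ empty, ℬ₁ nonempty
      have hAyes : ∀ A ∈ 𝒜', n ∉ A := fun A hA hnA => hA1 ⟨A, mem_filter.2 ⟨hA, hnA⟩⟩
      have hgA'' : Good (n-1) r 𝒜' := by
        intro A hA
        obtain ⟨hsub, hcard⟩ := hgA' A hA
        refine ⟨fun x hx => ?_, hcard⟩
        have h1 := mem_Icc.1 (hsub hx)
        rw [mem_Icc]
        have hxn : x ≠ n := fun e => hAyes A hA (e ▸ hx)
        omega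
      have hcrAB₀ : Cross 𝒜' ℬ₀ := fun A hA B hB => hcr' _ hA _ (mem_filter.1 hB).1
      have ih₀ := IH (n-1) (by omega) r 𝒜' ℬ₀ hr (by omega) hgA'' hgB₀ hAne' hB₀ne hcrAB₀
      obtain ⟨A₀, hA₀⟩ := hAne'
      have hmeets : ∀ X ∈ ℬ₁', (X ∩ A₀).Nonempty := by
        intro X hX
        obtain ⟨B, hB, rfl⟩ := mem_image.1 hX
        rw [mem_filter] at hB
        obtain ⟨x, hx⟩ := hcr' A₀ hA₀ B hB.1
        rw [mem_inter] at hx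
        have hxn : x ≠ n := fun e => hAyes A₀ hA₀ (e ▸ hx.1)
        exact ⟨x, mem_inter.2 ⟨mem_erase.2 ⟨hxn, hx.2⟩, hx.1⟩⟩
      have hbound := card_le_of_meets ℬ₁' A₀ (hgA'' A₀ hA₀).1 hgB₁ hmeets
      rw [(hgA' A₀ hA₀).2] at hbound
      rw [e1] at ih₀ hbound
      omega
    · -- both empty
      have hAyes : ∀ A ∈ 𝒜', n ∉ A := fun A hA hnA => hA1 ⟨A, mem_filter.2 ⟨hA, hnA⟩⟩
      have hByes : ∀ B ∈ ℬ', n ∉ B := fun B hB hnB => hB1 ⟨B, mem_filter.2 ⟨hB, hnB⟩⟩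
      have hgA'' : Good (n-1) r 𝒜' := by
        intro A hA
        obtain ⟨hsub, hcard⟩ := hgA' A hA
        refine ⟨fun x hx => ?_, hcard⟩
        have h1 := mem_Icc.1 (hsub hx)
        rw [mem_Icc]
        have hxn : x ≠ n := fun e => hAyes A hA (e ▸ hx)
        omega
      have hgB'' : Good (n-1) r ℬ' := by
        intro B hB
        obtain ⟨hsub, hcard⟩ := hgB' B hB
        refine ⟨fun x hx => ?_, hcard⟩
        have h1 := mem_Icc.1 (hsub hx)
        rw [mem_Icc]
        have hxn : x ≠ n := fun e => hByes B hB (e ▸ hx)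
        omega
      have ih₀ := IH (n-1) (by omega) r 𝒜' ℬ' hr (by omega) hgA'' hgB'' hAne' hBne' hcr'
      rw [e1] at ih₀
      have p5 : (n-r-1).choose (r-1) ≤ (n-1).choose (r-1) :=
        Nat.choose_le_choose _ (by omega)
      omega


end HMCross


theorem hilton_milner_cross (n r : ℕ) (hr : 1 ≤ r) (hrn : 2 * r ≤ n)
    (𝒜 ℬ : Finset (Finset ℕ))
    (h𝒜 : ∀ A ∈ 𝒜, A ⊆ Finset.Icc 1 n ∧ A.card = r)
    (hℬ : ∀ B ∈ ℬ, B ⊆ Finset.Icc 1 n ∧ B.card = r)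
    (h𝒜ne : 𝒜.Nonempty) (hℬne : ℬ.Nonempty)
    (hcross : ∀ A ∈ 𝒜, ∀ B ∈ ℬ, (A ∩ B).Nonempty) :
    𝒜.card + ℬ.card ≤ n.choose r - (n - r).choose r + 1 := by
  have hcore := HMCross.core n r 𝒜 ℬ hr hrn h𝒜 hℬ h𝒜ne hℬne hcross
  have hmono : (n - r).choose r ≤ n.choose r := Nat.choose_le_choose r (Nat.sub_le n r)
  omega
end
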